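/- arXiv:1702.01185 — 5 statements merged into one kernel-verified Lean document; each statement's English description precedes it below -/
import Mathlib

section
/- For every real ρ with 0 ≤ ρ < 3/(4+√6) there exist constants c₁, c₂, c₃, c₄ > 0, depending only on ρ, such that the following holds. Let N, n, s ≥ 1 be integers, let D be a real N×n matrix whose restricted isometry constant of order 2s satisfies ρ_{2s}(D) ≤ ρ, let c̃ ∈ ℝⁿ, y ∈ ℝᴺ and η ≥ 0 satisfy ‖Dc̃ − y‖₂ ≤ η, and let ĉ be any Basis Pursuit Denoising solution at level η. Then ‖c̃ − ĉ‖₂ ≤ (c₁/√s)·σ_s(c̃)₁ + c₂·η and ‖c̃ − ĉ‖₁ ≤ c₃·σ_s(c̃)₁ + c₄·η·√s. -/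
/-- The ℓ¹-norm of a finitely supported real vector. -/
noncomputable def l1norm {ι : Type*} [Fintype ι] (x : ι → ℝ) : ℝ := ∑ i, |x i|

/-- The ℓ²-norm of a finitely supported real vector. -/
noncomputable def l2norm {ι : Type*} [Fintype ι] (x : ι → ℝ) : ℝ := Real.sqrt (∑ i, (x i) ^ 2)

/-- `x` has at most `s` nonzero entries. -/
def Sparse {ι : Type*} (s : ℕ) (x : ι → ℝ) : Prop :=
  ∃ T : Finset ι, T.card ≤ s ∧ ∀ i ∉ T, x i = 0

/-- The best `s`-term approximation error `σ_s(c)₁ = min{‖c − z‖₁ : z is s-sparse}`. -/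
noncomputable def bestSTermError {ι : Type*} [Fintype ι] (s : ℕ) (c : ι → ℝ) : ℝ :=
  sInf ((fun z => l1norm (c - z)) '' {z | Sparse s z})

/-- `chat` is a Basis Pursuit Denoising solution at noise level `η`. -/
def IsBPDNSolution {ι κ : Type*} [Fintype ι] [Fintype κ]
    (D : Matrix ι κ ℝ) (y : ι → ℝ) (η : ℝ) (chat : κ → ℝ) : Prop :=
  l2norm (D.mulVec chat - y) ≤ η ∧
    ∀ c : κ → ℝ, l2norm (D.mulVec c - y) ≤ η → l1norm chat ≤ l1norm c

open Finset

section basics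
variable {ι : Type*} [Fintype ι]

noncomputable def rdot (a b : ι → ℝ) : ℝ := ∑ i, a i * b i

lemma l1norm_nonneg (x : ι → ℝ) : 0 ≤ l1norm x := Finset.sum_nonneg fun i _ => abs_nonneg _
lemma l2norm_nonneg (x : ι → ℝ) : 0 ≤ l2norm x := Real.sqrt_nonneg _
lemma l2norm_sq (x : ι → ℝ) : (l2norm x) ^ 2 = ∑ i, (x i) ^ 2 :=
  Real.sq_sqrt (Finset.sum_nonneg fun i _ => sq_nonneg _)

lemma rdot_le_l2 (a b : ι → ℝ) : rdot a b ≤ l2norm a * l2norm b := by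
  have h := Finset.sum_mul_sq_le_sq_mul_sq Finset.univ a b
  have h2 : rdot a b ≤ |rdot a b| := le_abs_self _
  refine h2.trans ?_
  have : |rdot a b| = Real.sqrt ((rdot a b) ^ 2) := by
    rw [Real.sqrt_sq_eq_abs]
  rw [this, l2norm, l2norm, ← Real.sqrt_mul (Finset.sum_nonneg fun i _ => sq_nonneg _)]
  exact Real.sqrt_le_sqrt h

lemma l2norm_add_le (a b : ι → ℝ) : l2norm (a + b) ≤ l2norm a + l2norm b := by
  have key : (l2norm (a + b)) ^ 2 ≤ (l2norm a + l2norm b) ^ 2 := by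
    rw [l2norm_sq]
    have hd := rdot_le_l2 a b
    have e : ∑ i, ((a + b) i) ^ 2 = (l2norm a) ^ 2 + 2 * rdot a b + (l2norm b) ^ 2 := by
      rw [l2norm_sq, l2norm_sq, rdot, Finset.mul_sum, ← Finset.sum_add_distrib,
        ← Finset.sum_add_distrib]
      exact Finset.sum_congr rfl fun i _ => by simp only [Pi.add_apply]; ring
    rw [e]; nlinarith [l2norm_nonneg a, l2norm_nonneg b]
  nlinarith [l2norm_nonneg (a + b), l2norm_nonneg a, l2norm_nonneg b]

lemma l2norm_neg (a : ι → ℝ) : l2norm (-a) = l2norm a := by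
  simp [l2norm]

lemma l2norm_sub_le (a b : ι → ℝ) : l2norm (a - b) ≤ l2norm a + l2norm b := by
  have h := l2norm_add_le a (-b)
  rw [l2norm_neg] at h
  simpa [sub_eq_add_neg] using h

lemma rdot_self (a : ι → ℝ) : rdot a a = (l2norm a)^2 := by
  rw [l2norm_sq, rdot]
  exact Finset.sum_congr rfl fun i _ => by ring

lemma rdot_sub_right (a b c : ι → ℝ) : rdot a (b - c) = rdot a b - rdot a c := by
  rw [rdot, rdot, rdot, ← Finset.sum_sub_distrib]
  exact Finset.sum_congr rfl fun i _ => by simp [Pi.sub_apply]; ring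

lemma rdot_smul_right (a : ι → ℝ) (c : ℝ) (b : ι → ℝ) : rdot a (c • b) = c * rdot a b := by
  rw [rdot, rdot, Finset.mul_sum]
  exact Finset.sum_congr rfl fun i _ => by simp [Pi.smul_apply, smul_eq_mul]; ring

lemma rdot_sum_right {γ : Type*} (a : ι → ℝ) (t : Finset γ) (f : γ → ι → ℝ) :
    rdot a (∑ i ∈ t, f i) = ∑ i ∈ t, rdot a (f i) := by
  simp only [rdot, Finset.sum_apply, Finset.mul_sum]
  exact Finset.sum_comm

end basics


open Finset

section sel
variable {ι : Type*} [Fintype ι] [DecidableEq ι]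

/-- There is a set of `min s (card ι)` indices carrying the largest `s` absolute entries. -/
lemma exists_best_set (c : ι → ℝ) (s : ℕ) :
    ∃ T : Finset ι, T.card = min s (Fintype.card ι) ∧
      (∀ F : Finset ι, F.card ≤ s → ∑ i ∈ F, |c i| ≤ ∑ i ∈ T, |c i|) ∧
      (∀ i ∉ T, ∀ j ∈ T, |c i| ≤ |c j|) := by
  set m := min s (Fintype.card ι) with hm
  have hmle : m ≤ Fintype.card ι := min_le_right _ _
  obtain ⟨t0, -, ht0⟩ := Finset.exists_subset_card_eq (s := (univ : Finset ι)) (n := m)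
    (by simpa using hmle)
  have hne : (Finset.univ.powersetCard m (α := ι)).Nonempty :=
    ⟨t0, by simpa [Finset.mem_powersetCard] using ht0⟩
  obtain ⟨T, hTmem, hTmax⟩ := Finset.exists_max_image _ (fun F => ∑ i ∈ F, |c i|) hne
  rw [Finset.mem_powersetCard] at hTmem
  obtain ⟨-, hTcard⟩ := hTmem
  refine ⟨T, hTcard, ?_, ?_⟩
  · intro F hF
    have hFm : F.card ≤ m := le_min hF (Finset.card_le_univ F)
    obtain ⟨C, hFC, -, hC⟩ := Finset.exists_subsuperset_card_eq (Finset.subset_univ F) hFm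
      (by simpa using hmle)
    calc ∑ i ∈ F, |c i| ≤ ∑ i ∈ C, |c i| :=
          Finset.sum_le_sum_of_subset_of_nonneg hFC (fun i _ _ => abs_nonneg _)
      _ ≤ ∑ i ∈ T, |c i| := hTmax C (by simp [Finset.mem_powersetCard, hC])
  · intro i hi j hj
    have hiT : i ∉ T.erase j := fun h => hi (Finset.mem_of_mem_erase h)
    have hcard : (insert i (T.erase j)).card = m := by
      rw [Finset.card_insert_of_notMem hiT, Finset.card_erase_of_mem hj, hTcard]
      have : 1 ≤ m := by
        rw [← hTcard]; exact Finset.card_pos.mpr ⟨j, hj⟩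
      omega
    have hmax := hTmax (insert i (T.erase j)) (by simp [Finset.mem_powersetCard, hcard])
    rw [Finset.sum_insert hiT] at hmax
    have herase : |c j| + ∑ k ∈ T.erase j, |c k| = ∑ k ∈ T, |c k| :=
      Finset.add_sum_erase _ (fun k => |c k|) hj
    linarith

lemma bestSTermError_nonneg (s : ℕ) (c : ι → ℝ) : 0 ≤ bestSTermError s c := by
  apply le_csInf
  · exact ⟨l1norm (c - 0), ⟨0, ⟨⟨∅, by simp⟩, rfl⟩⟩⟩
  · rintro b ⟨z, -, rfl⟩
    exact Finset.sum_nonneg fun i _ => abs_nonneg _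

/-- The tail sum off a best set `T` is a lower bound for every `‖c - z‖₁`, `z` `s`-sparse. -/
lemma tail_le_bestSTermError (c : ι → ℝ) (s : ℕ) (T : Finset ι)
    (hTmax : ∀ F : Finset ι, F.card ≤ s → ∑ i ∈ F, |c i| ≤ ∑ i ∈ T, |c i|) :
    ∑ i ∈ Tᶜ, |c i| ≤ bestSTermError s c := by
  apply le_csInf
  · exact ⟨l1norm (c - 0), ⟨0, ⟨⟨∅, by simp⟩, rfl⟩⟩⟩
  · rintro b ⟨z, ⟨Z, hZcard, hZ⟩, rfl⟩
    have h1 : ∑ i ∈ Zᶜ, |c i| ≤ l1norm (c - z) := by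
      rw [l1norm]
      simp only [Pi.sub_apply]
      rw [← Finset.sum_add_sum_compl Z fun i => |c i - z i|]
      have h2 : ∑ i ∈ Zᶜ, |c i| = ∑ i ∈ Zᶜ, |c i - z i| := by
        apply Finset.sum_congr rfl
        intro i hi
        rw [hZ i (by simpa using hi)]
        ring_nf
      rw [h2]
      have : (0:ℝ) ≤ ∑ i ∈ Z, |c i - z i| := Finset.sum_nonneg fun i _ => abs_nonneg _
      linarith
    refine le_trans ?_ h1
    have hZT := hTmax Z hZcard
    have hc : ∀ S : Finset ι, ∑ i ∈ Sᶜ, |c i| = l1norm c - ∑ i ∈ S, |c i| := by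
      intro S
      rw [l1norm, ← Finset.sum_add_sum_compl S fun i => |c i|]; ring
    rw [hc, hc]; linarith

end sel


open Finset

section polytope
variable {ι : Type*} [Fintype ι] [DecidableEq ι]

lemma abs_sub_sign {x : ℝ} (c : ℝ) (hx : x ≠ 0) (h0 : 0 ≤ c) (hc : c ≤ |x|) :
    |x - c * Real.sign x| = |x| - c := by
  rcases hx.lt_or_gt with h | h
  · rw [Real.sign_of_neg h]
    rw [abs_of_neg h] at hc ⊢
    rw [show x - c * (-1) = x + c by ring, abs_of_nonpos (by linarith)]
    ring
  · rw [Real.sign_of_pos h]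
    rw [abs_of_pos h] at hc ⊢
    rw [mul_one, abs_of_nonneg (by linarith)]

lemma abs_add_sign {x : ℝ} (c : ℝ) (hx : x ≠ 0) (h0 : 0 ≤ c) :
    |x + c * Real.sign x| = |x| + c := by
  rcases hx.lt_or_gt with h | h
  · rw [Real.sign_of_neg h]
    rw [abs_of_neg h]
    rw [show x + c * (-1) = x - c by ring, abs_of_nonpos (by linarith)]
    ring
  · rw [Real.sign_of_pos h]
    rw [abs_of_pos h]
    rw [mul_one, abs_of_nonneg (by linarith)]

/-- One endpoint of the mass-transfer segment: decrease entry `i`, increase entry `j`. -/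
noncomputable def ep (α : ℝ) (v : ι → ℝ) (i j : ι) : ι → ℝ := fun k =>
  if k = i then v i - min |v i| (α - |v j|) * Real.sign (v i)
  else if k = j then v j + min |v i| (α - |v j|) * Real.sign (v j)
  else v k

/-- Termination measure. -/
noncomputable def pmeas (α : ℝ) (v : ι → ℝ) : ℕ :=
  2 * (Finset.univ.filter (fun k => v k ≠ 0)).card
    - (Finset.univ.filter (fun k => v k ≠ 0 ∧ |v k| = α)).card

lemma ep_spec (α : ℝ) (v : ι → ℝ) (i j : ι) (hij : i ≠ j)
    (hi0 : v i ≠ 0) (hiα : |v i| < α) (hj0 : v j ≠ 0) (hjα : |v j| < α)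
    (hinf : ∀ k, |v k| ≤ α) :
    (∀ k, |ep α v i j k| ≤ α) ∧
    ((∑ k, |ep α v i j k|) = ∑ k, |v k|) ∧
    (∀ k, v k = 0 → ep α v i j k = 0) ∧
    pmeas α (ep α v i j) < pmeas α v := by
  set c := min |v i| (α - |v j|) with hcdef
  have hc0 : 0 < c := lt_min (abs_pos.mpr hi0) (by linarith)
  have hci : c ≤ |v i| := min_le_left _ _
  have hcj : |v j| + c ≤ α := by
    have := min_le_right |v i| (α - |v j|)
    linarith
  set w := ep α v i j with hwdef
  have hwi : w i = v i - c * Real.sign (v i) := by simp [hwdef, ep, hcdef]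
  have hwj : w j = v j + c * Real.sign (v j) := by simp [hwdef, ep, hij.symm, hcdef]
  have hwk : ∀ k, k ≠ i → k ≠ j → w k = v k := by
    intro k h1 h2; simp [hwdef, ep, h1, h2]
  have hai : |w i| = |v i| - c := by rw [hwi]; exact abs_sub_sign c hi0 hc0.le hci
  have haj : |w j| = |v j| + c := by rw [hwj]; exact abs_add_sign c hj0 hc0.le
  have hwj0 : w j ≠ 0 := by
    intro h
    rw [h] at haj
    simp at haj
    have := abs_nonneg (v j)
    linarith
  have hinfw : ∀ k, |w k| ≤ α := by
    intro k
    by_cases h1 : k = i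
    · rw [h1, hai]; linarith [hinf i]
    by_cases h2 : k = j
    · rw [h2, haj]; linarith
    · rw [hwk k h1 h2]; exact hinf k
  have hkey : ∀ u : ι → ℝ, ∑ k, |u k| = |u i| + |u j| + ∑ k ∈ (univ.erase i).erase j, |u k| := by
    intro u
    rw [← Finset.add_sum_erase _ (fun k => |u k|) (mem_univ i),
      ← Finset.add_sum_erase _ (fun k => |u k|)
        (Finset.mem_erase.mpr ⟨hij.symm, mem_univ j⟩)]
    ring
  have hsum : (∑ k, |w k|) = ∑ k, |v k| := by
    rw [hkey w, hkey v, hai, haj]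
    have : ∑ k ∈ (univ.erase i).erase j, |w k| = ∑ k ∈ (univ.erase i).erase j, |v k| := by
      apply Finset.sum_congr rfl
      intro k hk
      rw [Finset.mem_erase, Finset.mem_erase] at hk
      rw [hwk k hk.2.1 hk.1]
    rw [this]; ring
  have hsupp : ∀ k, v k = 0 → w k = 0 := by
    intro k hk
    have h1 : k ≠ i := fun h => hi0 (h ▸ hk)
    have h2 : k ≠ j := fun h => hj0 (h ▸ hk)
    rw [hwk k h1 h2]; exact hk
  refine ⟨hinfw, hsum, hsupp, ?_⟩
  -- measure decrease
  set Sv := Finset.univ.filter (fun k => v k ≠ 0) with hSv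
  set Sw := Finset.univ.filter (fun k => w k ≠ 0) with hSw
  set Fv := Finset.univ.filter (fun k => v k ≠ 0 ∧ |v k| = α) with hFv
  set Fw := Finset.univ.filter (fun k => w k ≠ 0 ∧ |w k| = α) with hFw
  have hSwv : Sw ⊆ Sv := by
    intro k hk
    rw [hSw, Finset.mem_filter] at hk
    rw [hSv, Finset.mem_filter]
    refine ⟨mem_univ k, ?_⟩
    intro h0
    exact hk.2 (hsupp k h0)
  have hFvw : Fv ⊆ Fw := by
    intro k hk
    rw [hFv, Finset.mem_filter] at hk
    obtain ⟨-, hk0, hkα⟩ := hk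
    have h1 : k ≠ i := fun h => absurd hkα (by rw [h]; exact ne_of_lt hiα)
    have h2 : k ≠ j := fun h => absurd hkα (by rw [h]; exact ne_of_lt hjα)
    rw [hFw, Finset.mem_filter]
    rw [hwk k h1 h2]
    exact ⟨mem_univ k, hk0, hkα⟩
  have hFwSw : Fw ⊆ Sw := by
    intro k hk
    rw [hFw, Finset.mem_filter] at hk
    rw [hSw, Finset.mem_filter]
    exact ⟨mem_univ k, hk.2.1⟩
  have hiSv : i ∈ Sv := by rw [hSv, Finset.mem_filter]; exact ⟨mem_univ i, hi0⟩
  rcases le_total |v i| (α - |v j|) with hmin | hmin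
  · -- c = |v i|, entry i vanishes
    have hceq : c = |v i| := min_eq_left hmin
    have hwi0 : w i = 0 := by
      have : |w i| = 0 := by rw [hai, hceq]; ring
      exact abs_eq_zero.mp this
    have hiSw : i ∉ Sw := by
      rw [hSw, Finset.mem_filter]
      push_neg
      intro _; exact hwi0
    have hcard : Sw.card < Sv.card :=
      Finset.card_lt_card ⟨hSwv, fun h => hiSw (h hiSv)⟩
    have h1 := Finset.card_le_card hFwSw
    have h2 := Finset.card_le_card hFvw
    rw [pmeas, pmeas, ← hSv, ← hSw, ← hFv, ← hFw]
    omega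
  · -- c = α - |v j|, entry j becomes full
    have hceq : c = α - |v j| := min_eq_right hmin
    have hwjα : |w j| = α := by rw [haj, hceq]; ring
    have hjFw : j ∈ Fw := by
      rw [hFw, Finset.mem_filter]
      exact ⟨mem_univ j, hwj0, hwjα⟩
    have hjFv : j ∉ Fv := by
      rw [hFv, Finset.mem_filter]
      push_neg
      intro _ _
      exact ne_of_lt hjα
    have hcard : Fv.card < Fw.card :=
      Finset.card_lt_card ⟨hFvw, fun h => hjFv (h hjFw)⟩
    have h1 := Finset.card_le_card hFwSw
    have h2 := Finset.card_le_card (hSwv.trans (Finset.filter_subset _ _))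
    have h3 := Finset.card_le_card hSwv
    rw [pmeas, pmeas, ← hSv, ← hSw, ← hFv, ← hFw]
    omega

end polytope

section polytope2
variable {ι : Type*} [Fintype ι] [DecidableEq ι]

lemma exists_pair (s : ℕ) (α : ℝ) (v : ι → ℝ)
    (hinf : ∀ i, |v i| ≤ α) (h1 : (∑ i, |v i|) ≤ s * α)
    (hbig : s < (Finset.univ.filter (fun k => v k ≠ 0)).card) :
    ∃ i j, i ≠ j ∧ v i ≠ 0 ∧ |v i| < α ∧ v j ≠ 0 ∧ |v j| < α := by
  set Sv := Finset.univ.filter (fun k => v k ≠ 0) with hSv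
  set Fv := Finset.univ.filter (fun k => v k ≠ 0 ∧ |v k| = α) with hFv
  set Frac := Sv \ Fv with hFrac
  have hFvSv : Fv ⊆ Sv := by
    intro k hk
    rw [hFv, Finset.mem_filter] at hk
    rw [hSv, Finset.mem_filter]
    exact ⟨Finset.mem_univ k, hk.2.1⟩
  have hαpos : 0 < α := by
    have hne : Sv.Nonempty := Finset.card_pos.mp (lt_of_le_of_lt (Nat.zero_le _) hbig)
    obtain ⟨k, hk⟩ := hne
    rw [hSv, Finset.mem_filter] at hk
    exact lt_of_lt_of_le (abs_pos.mpr hk.2) (hinf k)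
  have hFracmem : ∀ k ∈ Frac, v k ≠ 0 ∧ |v k| < α := by
    intro k hk
    rw [hFrac, Finset.mem_sdiff, hSv, hFv, Finset.mem_filter, Finset.mem_filter] at hk
    obtain ⟨⟨-, hk0⟩, hk2⟩ := hk
    refine ⟨hk0, ?_⟩
    rcases lt_or_eq_of_le (hinf k) with h | h
    · exact h
    · exact absurd ⟨Finset.mem_univ k, hk0, h⟩ hk2
  have hfull_sum : ∑ k ∈ Fv, |v k| = (Fv.card : ℝ) * α := by
    rw [Finset.sum_congr rfl (fun k hk => (Finset.mem_filter.mp hk).2.2),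
      Finset.sum_const, nsmul_eq_mul]
  have hFvlt : Fv.card < s := by
    by_contra hcon
    push_neg at hcon
    have hcast : (s : ℝ) * α ≤ (Fv.card : ℝ) * α :=
      mul_le_mul_of_nonneg_right (by exact_mod_cast hcon) hαpos.le
    rcases Finset.eq_empty_or_nonempty Frac with hemp | ⟨k, hk⟩
    · have hsub : Sv ⊆ Fv := by
        intro k hk
        by_contra hkF
        exact absurd (Finset.mem_sdiff.mpr ⟨hk, hkF⟩) (by rw [← hFrac, hemp]; simp)
      have hcard : s + 1 ≤ Fv.card := le_trans hbig (Finset.card_le_card hsub)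
      have : ((s : ℝ) + 1) * α ≤ ∑ k ∈ Fv, |v k| := by
        rw [hfull_sum]
        apply mul_le_mul_of_nonneg_right _ hαpos.le
        exact_mod_cast hcard
      have hle : ∑ k ∈ Fv, |v k| ≤ ∑ k, |v k| :=
        Finset.sum_le_sum_of_subset_of_nonneg (Finset.subset_univ _)
          (fun k _ _ => abs_nonneg _)
      nlinarith
    · obtain ⟨hk0, -⟩ := hFracmem k hk
      have hkF : k ∉ Fv := (Finset.mem_sdiff.mp hk).2
      have h' : ∑ m ∈ insert k Fv, |v m| ≤ ∑ m, |v m| :=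
        Finset.sum_le_sum_of_subset_of_nonneg (Finset.subset_univ _)
          (fun m _ _ => abs_nonneg _)
      rw [Finset.sum_insert hkF, hfull_sum] at h'
      have hk0' : 0 < |v k| := abs_pos.mpr hk0
      linarith
  have hcard2 : 2 ≤ Frac.card := by
    rw [hFrac, Finset.card_sdiff_of_subset hFvSv]
    omega
  obtain ⟨i, hi, j, hj, hij⟩ := Finset.one_lt_card.mp (by omega : 1 < Frac.card)
  obtain ⟨hi0, hiα⟩ := hFracmem i hi
  obtain ⟨hj0, hjα⟩ := hFracmem j hj
  exact ⟨i, j, hij, hi0, hiα, hj0, hjα⟩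

lemma mem_of_small (s : ℕ) (α : ℝ) (v : ι → ℝ) (hinf : ∀ i, |v i| ≤ α)
    (hsmall : (Finset.univ.filter (fun k => v k ≠ 0)).card ≤ s) :
    v ∈ convexHull ℝ {u : ι → ℝ | Sparse s u ∧ (∀ i, |u i| ≤ α) ∧ ∀ i, v i = 0 → u i = 0} := by
  apply subset_convexHull
  refine ⟨⟨_, hsmall, ?_⟩, hinf, fun i h => h⟩
  intro i hi
  by_contra h0
  exact hi (Finset.mem_filter.mpr ⟨Finset.mem_univ i, h0⟩)

lemma polytope_aux (s : ℕ) (α : ℝ) :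
    ∀ (M : ℕ) (v : ι → ℝ), pmeas α v ≤ M → (∀ i, |v i| ≤ α) → ((∑ i, |v i|) ≤ s * α) →
    v ∈ convexHull ℝ {u : ι → ℝ | Sparse s u ∧ (∀ i, |u i| ≤ α) ∧ ∀ i, v i = 0 → u i = 0} := by
  intro M
  induction M with
  | zero =>
    intro v hM hinf h1
    apply mem_of_small s α v hinf
    have hsub : (Finset.univ.filter (fun k => v k ≠ 0 ∧ |v k| = α)).card ≤
        (Finset.univ.filter (fun k => v k ≠ 0)).card := by
      apply Finset.card_le_card
      intro k hk
      rw [Finset.mem_filter] at hk ⊢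
      exact ⟨hk.1, hk.2.1⟩
    rw [pmeas] at hM
    omega
  | succ M IH =>
    intro v hM hinf h1
    by_cases hsmall : (Finset.univ.filter (fun k => v k ≠ 0)).card ≤ s
    · exact mem_of_small s α v hinf hsmall
    push_neg at hsmall
    obtain ⟨i, j, hij, hi0, hiα, hj0, hjα⟩ := exists_pair s α v hinf h1 hsmall
    obtain ⟨hinf1, hsum1, hsupp1, hlt1⟩ := ep_spec α v i j hij hi0 hiα hj0 hjα hinf
    obtain ⟨hinf2, hsum2, hsupp2, hlt2⟩ := ep_spec α v j i hij.symm hj0 hjα hi0 hiα hinf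
    have hw1 : ep α v i j ∈
        convexHull ℝ {u : ι → ℝ | Sparse s u ∧ (∀ i, |u i| ≤ α) ∧ ∀ k, v k = 0 → u k = 0} := by
      refine convexHull_mono ?_ (IH (ep α v i j) (by omega) hinf1 (by rw [hsum1]; exact h1))
      intro u hu
      exact ⟨hu.1, hu.2.1, fun k hk => hu.2.2 k (hsupp1 k hk)⟩
    have hw2 : ep α v j i ∈
        convexHull ℝ {u : ι → ℝ | Sparse s u ∧ (∀ i, |u i| ≤ α) ∧ ∀ k, v k = 0 → u k = 0} := by
      refine convexHull_mono ?_ (IH (ep α v j i) (by omega) hinf2 (by rw [hsum2]; exact h1))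
      intro u hu
      exact ⟨hu.1, hu.2.1, fun k hk => hu.2.2 k (hsupp2 k hk)⟩
    set c1 := min |v i| (α - |v j|) with hc1def
    set c2 := min |v j| (α - |v i|) with hc2def
    have hc1 : 0 < c1 := lt_min (abs_pos.mpr hi0) (by linarith)
    have hc2 : 0 < c2 := lt_min (abs_pos.mpr hj0) (by linarith)
    have hc12 : 0 < c1 + c2 := by linarith
    set θ := c2 / (c1 + c2) with hθdef
    have hθ0 : 0 ≤ θ := by positivity
    have hθ1 : θ ≤ 1 := by rw [hθdef, div_le_one hc12]; linarith
    have hkey : θ * c1 = (1 - θ) * c2 := by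
      rw [hθdef]
      field_simp
      ring
    have heq : v = θ • (ep α v i j) + (1 - θ) • (ep α v j i) := by
      funext k
      simp only [Pi.add_apply, Pi.smul_apply, smul_eq_mul]
      by_cases h1k : k = i
      · have e1 : ep α v i j i = v i - c1 * Real.sign (v i) := by simp [ep, hc1def]
        have e2 : ep α v j i i = v i + c2 * Real.sign (v i) := by simp [ep, hij, hc2def]
        rw [h1k, e1, e2]
        linear_combination Real.sign (v i) * hkey
      by_cases h2k : k = j
      · have e1 : ep α v i j j = v j + c1 * Real.sign (v j) := by simp [ep, hij.symm, hc1def]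
        have e2 : ep α v j i j = v j - c2 * Real.sign (v j) := by simp [ep, hc2def]
        rw [h2k, e1, e2]
        linear_combination (-(Real.sign (v j))) * hkey
      · have e1 : ep α v i j k = v k := by simp [ep, h1k, h2k]
        have e2 : ep α v j i k = v k := by simp [ep, h1k, h2k]
        rw [e1, e2]
        ring
    have hab : θ + (1 - θ) = 1 := by ring
    have hmem := (convex_convexHull ℝ
      {u : ι → ℝ | Sparse s u ∧ (∀ i, |u i| ≤ α) ∧ ∀ k, v k = 0 → u k = 0})
      hw1 hw2 hθ0 (by linarith) hab
    rw [← heq] at hmem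
    exact hmem

lemma polytope_decomp (s : ℕ) (α : ℝ) (v : ι → ℝ)
    (hinf : ∀ i, |v i| ≤ α) (h1 : (∑ i, |v i|) ≤ s * α) :
    v ∈ convexHull ℝ {u : ι → ℝ | Sparse s u ∧ (∀ i, |u i| ≤ α) ∧ ∀ i, v i = 0 → u i = 0} :=
  polytope_aux s α (pmeas α v) v le_rfl hinf h1

end polytope2


lemma quad_root_bound {t b c : ℝ} (ht : 0 ≤ t) (hb : 0 ≤ b) (hc : 0 ≤ c)
    (h : t^2 ≤ b*t + c) : t ≤ b + Real.sqrt c := by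
  by_contra hcon
  push_neg at hcon
  have hs0 : 0 ≤ Real.sqrt c := Real.sqrt_nonneg c
  have hsq : Real.sqrt c ^ 2 = c := Real.sq_sqrt hc
  nlinarith [mul_pos (by linarith : (0:ℝ) < t - b - Real.sqrt c)
    (by linarith : (0:ℝ) < t + Real.sqrt c)]

set_option maxHeartbeats 1000000 in
/-- Theorem 4.5 (Rauhut–Ward): stable and robust recovery via Basis Pursuit Denoising under
the restricted isometry condition `ρ_{2s}(D) ≤ ρ < 3/(4+√6)`. -/
theorem bpdn_recovery_under_rip :
    ∀ ρ : ℝ, 0 ≤ ρ → ρ < 3 / (4 + Real.sqrt 6) →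
    ∃ c₁ c₂ c₃ c₄ : ℝ, 0 < c₁ ∧ 0 < c₂ ∧ 0 < c₃ ∧ 0 < c₄ ∧
      ∀ (N n s : ℕ), 1 ≤ N → 1 ≤ n → 1 ≤ s →
      ∀ D : Matrix (Fin N) (Fin n) ℝ,
      (∀ c : Fin n → ℝ, Sparse (2 * s) c →
        (1 - ρ) * (l2norm c) ^ 2 ≤ (l2norm (D.mulVec c)) ^ 2 ∧
          (l2norm (D.mulVec c)) ^ 2 ≤ (1 + ρ) * (l2norm c) ^ 2) →
      ∀ (ctil : Fin n → ℝ) (y : Fin N → ℝ) (η : ℝ), 0 ≤ η →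
        l2norm (D.mulVec ctil - y) ≤ η →
      ∀ chat : Fin n → ℝ, IsBPDNSolution D y η chat →
        l2norm (ctil - chat) ≤ c₁ / Real.sqrt (s : ℝ) * bestSTermError s ctil + c₂ * η ∧
        l1norm (ctil - chat) ≤ c₃ * bestSTermError s ctil + c₄ * η * Real.sqrt (s : ℝ) := by
  intro ρ hρ0 hρlt
  have h6 : (2:ℝ) ≤ Real.sqrt 6 := by
    rw [show (2:ℝ) = Real.sqrt 4 by
      rw [show (4:ℝ) = 2^2 by norm_num, Real.sqrt_sq (by norm_num : (0:ℝ) ≤ 2)]]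
    exact Real.sqrt_le_sqrt (by norm_num)
  have hρhalf : ρ < 1/2 := by
    have hpos : (0:ℝ) < 4 + Real.sqrt 6 := by linarith
    have h2 : 3 / (4 + Real.sqrt 6) ≤ 3/6 := by
      rw [div_le_div_iff₀ hpos (by norm_num : (0:ℝ) < 6)]
      linarith only [h6]
    linarith
  have h1ρ : (0:ℝ) < 1 + ρ := by linarith
  set K := 4 - 8*ρ with hKdef
  have hKpos : 0 < K := by rw [hKdef]; linarith
  set C2 := 8 * Real.sqrt (1+ρ) / K with hC2def
  set Ce := 4*ρ/K + Real.sqrt (2*ρ/K) with hCedef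
  have hsq1ρ : 0 < Real.sqrt (1+ρ) := Real.sqrt_pos.mpr h1ρ
  have hC2pos : 0 < C2 := div_pos (by linarith) hKpos
  have hCe0 : 0 ≤ Ce := add_nonneg (div_nonneg (by linarith) hKpos.le) (Real.sqrt_nonneg _)
  refine ⟨4*Ce + 2, 2*C2, 4*Ce + 2, 2*C2, by linarith, by linarith, by linarith, by linarith, ?_⟩
  intro N n s hN hn hs D hRIP ctil y η hη hfeas chat hBPDN
  classical
  set h := ctil - chat with hhdef
  have hchat : ∀ i, chat i = ctil i - h i := fun i => by simp [hhdef]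
  have hDh : l2norm (D.mulVec h) ≤ 2*η := by
    have e : D.mulVec h = (D.mulVec ctil - y) - (D.mulVec chat - y) := by
      rw [hhdef, Matrix.mulVec_sub]
      abel
    rw [e]
    have h2 := l2norm_sub_le (D.mulVec ctil - y) (D.mulVec chat - y)
    linarith only [h2, hBPDN.1, hfeas]
  set σ := bestSTermError s ctil with hσdef
  have hσ0 : 0 ≤ σ := bestSTermError_nonneg s ctil
  obtain ⟨T, hTcard, hTmax, -⟩ := exists_best_set ctil s
  obtain ⟨S, hScard, hSmax, hSswap⟩ := exists_best_set h s
  have hσT : ∑ i ∈ Tᶜ, |ctil i| ≤ σ := tail_le_bestSTermError ctil s T hTmax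
  have hsn : (Fintype.card (Fin n)) = n := Fintype.card_fin n
  have hl1split : ∀ (F : Finset (Fin n)) (c : Fin n → ℝ),
      ∑ i ∈ F, |c i| + ∑ i ∈ Fᶜ, |c i| = l1norm c :=
    fun F c => Finset.sum_add_sum_compl F _
  have hl1le : l1norm chat ≤ l1norm ctil := hBPDN.2 ctil hfeas
  have hconeT : ∑ i ∈ Tᶜ, |h i| ≤ ∑ i ∈ T, |h i| + 2*σ := by
    have h3 : ∑ i ∈ T, |ctil i| - ∑ i ∈ T, |h i| ≤ ∑ i ∈ T, |chat i| := by
      rw [← Finset.sum_sub_distrib]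
      apply Finset.sum_le_sum
      intro i _
      rw [hchat i]
      exact abs_sub_abs_le_abs_sub _ _
    have h4 : ∑ i ∈ Tᶜ, |h i| - ∑ i ∈ Tᶜ, |ctil i| ≤ ∑ i ∈ Tᶜ, |chat i| := by
      rw [← Finset.sum_sub_distrib]
      apply Finset.sum_le_sum
      intro i _
      rw [hchat i]
      rw [abs_sub_comm (ctil i) (h i)]
      exact abs_sub_abs_le_abs_sub _ _
    have h5 := hl1split T chat
    have h7 := hl1split T ctil
    linarith only [h3, h4, h5, h7, hl1le, hσT]
  have hcone : ∑ i ∈ Sᶜ, |h i| ≤ ∑ i ∈ S, |h i| + 2*σ := by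
    have hTS : ∑ i ∈ T, |h i| ≤ ∑ i ∈ S, |h i| := by
      apply hSmax T
      rw [hTcard]
      exact min_le_left _ _
    have h5 := hl1split S h
    have h7 := hl1split T h
    linarith only [hTS, h5, h7, hconeT]
  set x := fun i => if i ∈ S then h i else 0 with hxdef
  set tl := fun i => if i ∈ S then 0 else h i with htldef
  have hxtl : h = x + tl := by
    funext k
    by_cases hk : k ∈ S <;> simp [hxdef, htldef, hk]
  have htlh : tl = h - x := by
    funext k
    by_cases hk : k ∈ S <;> simp [hxdef, htldef, hk]
  set t := l2norm x with htdef
  have ht0 : 0 ≤ t := l2norm_nonneg x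
  have hsR : (0:ℝ) < (s:ℝ) := by exact_mod_cast hs
  have hsqs : Real.sqrt s * Real.sqrt s = (s:ℝ) := Real.mul_self_sqrt hsR.le
  have hsqs0 : 0 < Real.sqrt s := Real.sqrt_pos.mpr hsR
  set ℓS := ∑ i ∈ S, |h i| with hlSdef
  have hlS0 : 0 ≤ ℓS := Finset.sum_nonneg fun i _ => abs_nonneg _
  set α := (ℓS + 2*σ)/(s:ℝ) with hαdef
  have hα0 : 0 ≤ α := div_nonneg (by linarith) hsR.le
  have hx2 : t^2 = ∑ i ∈ S, (h i)^2 := by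
    rw [htdef, l2norm_sq]
    have e1 : ∀ i, (x i)^2 = if i ∈ S then (h i)^2 else 0 := by
      intro i
      by_cases hk : i ∈ S <;> simp [hxdef, hk]
    calc ∑ i, (x i)^2 = ∑ i, if i ∈ S then (h i)^2 else 0 :=
          Finset.sum_congr rfl fun i _ => e1 i
      _ = ∑ i ∈ S, (h i)^2 := by rw [Finset.sum_ite_mem, Finset.univ_inter]
  have htl1 : ∑ i, |tl i| = ∑ i ∈ Sᶜ, |h i| := by
    have e1 : ∀ i, |tl i| = if i ∈ Sᶜ then |h i| else 0 := by
      intro i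
      by_cases hk : i ∈ S <;> simp [htldef, hk]
    calc ∑ i, |tl i| = ∑ i, if i ∈ Sᶜ then |h i| else 0 :=
          Finset.sum_congr rfl fun i _ => e1 i
      _ = ∑ i ∈ Sᶜ, |h i| := by rw [Finset.sum_ite_mem, Finset.univ_inter]
  have htl_inf : ∀ k, |tl k| ≤ α := by
    intro k
    by_cases hk : k ∈ S
    · simpa [htldef, hk] using hα0
    · have hzk : |tl k| = |h k| := by simp [htldef, hk]
      rw [hzk]
      rcases le_or_gt s n with hsn' | hsn'
      · have hcard : S.card = s := by rw [hScard, hsn]; exact min_eq_left hsn'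
        have hsum : S.card • |h k| ≤ ∑ j ∈ S, |h j| :=
          Finset.card_nsmul_le_sum S _ _ (fun j hj => hSswap k hk j hj)
        rw [hcard, nsmul_eq_mul] at hsum
        rw [hαdef, le_div_iff₀ hsR]
        calc |h k| * s = (s:ℝ) * |h k| := by ring
          _ ≤ ℓS := hsum
          _ ≤ ℓS + 2*σ := by linarith only [hσ0]
      · exfalso
        have hSuniv : S = Finset.univ := by
          apply Finset.eq_univ_of_card
          rw [hScard, hsn, min_eq_right hsn'.le]
        rw [hSuniv] at hk
        exact hk (Finset.mem_univ k)
  have htl_l1 : ∑ i, |tl i| ≤ (s:ℝ) * α := by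
    rw [htl1, hαdef, mul_div_cancel₀ _ hsR.ne']
    exact hcone
  have hdecomp := polytope_decomp s α tl htl_inf htl_l1
  rw [_root_.convexHull_eq] at hdecomp
  obtain ⟨γ, tfin, w, z, hw0, hw1, hz, hcm⟩ := hdecomp
  rw [Finset.centerMass_eq_of_sum_1 _ _ hw1] at hcm
  have hDtl : D.mulVec tl = ∑ i ∈ tfin, w i • D.mulVec (z i) := by
    rw [← hcm]
    calc D.mulVec (∑ i ∈ tfin, w i • z i)
        = D.mulVecLin (∑ i ∈ tfin, w i • z i) := by rw [Matrix.mulVecLin_apply]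
      _ = ∑ i ∈ tfin, w i • D.mulVecLin (z i) := by
          rw [map_sum]
          exact Finset.sum_congr rfl fun i _ => map_smul _ _ _
      _ = ∑ i ∈ tfin, w i • D.mulVec (z i) := by
          exact Finset.sum_congr rfl fun i _ => by rw [Matrix.mulVecLin_apply]
  have hScard_le : S.card ≤ s := by rw [hScard, hsn]; exact min_le_left _ _
  have hx_sp : Sparse (2*s) x := by
    refine ⟨S, by omega, fun k hk => by simp [hxdef, hk]⟩
  have hRIPx := hRIP x hx_sp
  have hDx_up : l2norm (D.mulVec x) ≤ Real.sqrt (1+ρ) * t := by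
    have h1 := hRIPx.2
    rw [← htdef] at h1
    calc l2norm (D.mulVec x) = Real.sqrt ((l2norm (D.mulVec x))^2) :=
          (Real.sqrt_sq (l2norm_nonneg _)).symm
      _ ≤ Real.sqrt ((1+ρ) * t^2) := Real.sqrt_le_sqrt h1
      _ = Real.sqrt (1+ρ) * t := by
          rw [Real.sqrt_mul h1ρ.le, Real.sqrt_sq ht0]
  have hdot : rdot (D.mulVec x) (D.mulVec h) ≤ Real.sqrt (1+ρ) * t * (2*η) := by
    calc rdot (D.mulVec x) (D.mulVec h) ≤ l2norm (D.mulVec x) * l2norm (D.mulVec h) :=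
          rdot_le_l2 _ _
      _ ≤ (Real.sqrt (1+ρ) * t) * (2*η) :=
          mul_le_mul hDx_up hDh (l2norm_nonneg _) (by positivity)
  -- per-index estimates
  have hkey1 : ∀ i ∈ tfin,
      (l2norm (D.mulVec (x - z i)))^2 - (l2norm (D.mulVec (x + z i)))^2
        ≤ 2*ρ*(t^2 + s*α^2) := by
    intro i hi
    obtain ⟨hsp, hbd, hsup⟩ := hz i hi
    obtain ⟨Tz, hTzcard, hTz0⟩ := hsp
    have hZsq : ∑ k, (z i k)^2 ≤ (s:ℝ) * α^2 := by
      have e1 : ∑ k, (z i k)^2 = ∑ k ∈ Tz, (z i k)^2 :=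
        (Finset.sum_subset (Finset.subset_univ _)
          (fun k _ hk => by rw [hTz0 k hk]; ring)).symm
      rw [e1]
      calc ∑ k ∈ Tz, (z i k)^2 ≤ ∑ k ∈ Tz, α^2 :=
            Finset.sum_le_sum (fun k _ => by
              rw [← sq_abs]
              exact pow_le_pow_left₀ (abs_nonneg _) (hbd k) 2)
        _ = (Tz.card : ℝ) * α^2 := by rw [Finset.sum_const, nsmul_eq_mul]
        _ ≤ (s:ℝ) * α^2 :=
            mul_le_mul_of_nonneg_right (by exact_mod_cast hTzcard) (sq_nonneg _)
    have hdisj : ∀ k, x k * z i k = 0 := by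
      intro k
      by_cases hk : k ∈ S
      · rw [hsup k (by simp [htldef, hk])]; ring
      · simp [hxdef, hk]
    have hplus_norm : (l2norm (x + z i))^2 = t^2 + ∑ k, (z i k)^2 := by
      rw [l2norm_sq, htdef, l2norm_sq, ← Finset.sum_add_distrib]
      refine Finset.sum_congr rfl fun k _ => ?_
      simp only [Pi.add_apply]
      linear_combination 2 * hdisj k
    have hminus_norm : (l2norm (x - z i))^2 = t^2 + ∑ k, (z i k)^2 := by
      rw [l2norm_sq, htdef, l2norm_sq, ← Finset.sum_add_distrib]
      refine Finset.sum_congr rfl fun k _ => ?_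
      simp only [Pi.sub_apply]
      linear_combination (-2) * hdisj k
    have hsp_plus : Sparse (2*s) (x + z i) := by
      refine ⟨S ∪ Tz, ?_, fun k hk => ?_⟩
      · calc (S ∪ Tz).card ≤ S.card + Tz.card := Finset.card_union_le _ _
          _ ≤ 2*s := by omega
      · rw [Finset.mem_union] at hk
        push_neg at hk
        simp [hxdef, hk.1, hTz0 k hk.2]
    have hsp_minus : Sparse (2*s) (x - z i) := by
      refine ⟨S ∪ Tz, ?_, fun k hk => ?_⟩
      · calc (S ∪ Tz).card ≤ S.card + Tz.card := Finset.card_union_le _ _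
          _ ≤ 2*s := by omega
      · rw [Finset.mem_union] at hk
        push_neg at hk
        simp [hxdef, hk.1, hTz0 k hk.2]
    have hr_plus := (hRIP _ hsp_plus).1
    have hr_minus := (hRIP _ hsp_minus).2
    rw [hplus_norm] at hr_plus
    rw [hminus_norm] at hr_minus
    have hmul : 2*ρ*(t^2 + ∑ k, (z i k)^2) ≤ 2*ρ*(t^2 + s*α^2) := by
      apply mul_le_mul_of_nonneg_left _ (by linarith only [hρ0] : (0:ℝ) ≤ 2*ρ)
      linarith only [hZsq]
    linarith only [hr_plus, hr_minus, hmul]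
  have hkey2 : ∀ i ∈ tfin,
      (l2norm (D.mulVec (x + z i)))^2 - (l2norm (D.mulVec (x - z i)))^2
        = 4 * rdot (D.mulVec x) (D.mulVec (z i)) := by
    intro i hi
    rw [Matrix.mulVec_add, Matrix.mulVec_sub, l2norm_sq, l2norm_sq, rdot,
      Finset.mul_sum, ← Finset.sum_sub_distrib]
    refine Finset.sum_congr rfl fun k _ => ?_
    simp only [Pi.add_apply, Pi.sub_apply]
    ring
  set A := 2*ρ*(t^2 + s*α^2) with hA
  have hsum_le : ∑ i ∈ tfin,
      w i * ((l2norm (D.mulVec (x - z i)))^2 - (l2norm (D.mulVec (x + z i)))^2) ≤ A := by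
    calc ∑ i ∈ tfin,
        w i * ((l2norm (D.mulVec (x - z i)))^2 - (l2norm (D.mulVec (x + z i)))^2)
        ≤ ∑ i ∈ tfin, w i * A :=
          Finset.sum_le_sum (fun i hi =>
            mul_le_mul_of_nonneg_left (hkey1 i hi) (hw0 i hi))
      _ = A := by rw [← Finset.sum_mul, hw1, one_mul]
  have hsum_eq : ∑ i ∈ tfin,
      w i * ((l2norm (D.mulVec (x - z i)))^2 - (l2norm (D.mulVec (x + z i)))^2)
        = 4*((l2norm (D.mulVec x))^2 - rdot (D.mulVec x) (D.mulVec h)) := by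
    have e1 : rdot (D.mulVec x) (D.mulVec tl)
        = ∑ i ∈ tfin, w i * rdot (D.mulVec x) (D.mulVec (z i)) := by
      rw [hDtl, rdot_sum_right]
      exact Finset.sum_congr rfl fun i _ => rdot_smul_right _ _ _
    have e2 : D.mulVec tl = D.mulVec h - D.mulVec x := by rw [htlh, Matrix.mulVec_sub]
    have e3 : rdot (D.mulVec x) (D.mulVec tl)
        = rdot (D.mulVec x) (D.mulVec h) - (l2norm (D.mulVec x))^2 := by
      rw [e2, rdot_sub_right, rdot_self]
    calc ∑ i ∈ tfin,
        w i * ((l2norm (D.mulVec (x - z i)))^2 - (l2norm (D.mulVec (x + z i)))^2)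
        = ∑ i ∈ tfin, (-4) * (w i * rdot (D.mulVec x) (D.mulVec (z i))) :=
          Finset.sum_congr rfl (fun i hi => by linear_combination (-(w i)) * hkey2 i hi)
      _ = (-4) * ∑ i ∈ tfin, w i * rdot (D.mulVec x) (D.mulVec (z i)) := by
          rw [Finset.mul_sum]
      _ = 4*((l2norm (D.mulVec x))^2 - rdot (D.mulVec x) (D.mulVec h)) := by
          rw [← e1, e3]; ring
  set e := 2*σ/Real.sqrt s with hedef
  have he0 : 0 ≤ e := div_nonneg (by linarith) hsqs0.le
  have hlS_t : ℓS ≤ Real.sqrt s * t := by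
    have hcs := Finset.sum_mul_sq_le_sq_mul_sq S (fun _ => (1:ℝ)) (fun i => |h i|)
    simp only [one_pow, one_mul] at hcs
    have habs : ∑ i ∈ S, |h i|^2 = ∑ i ∈ S, (h i)^2 :=
      Finset.sum_congr rfl fun i _ => sq_abs _
    rw [habs, Finset.sum_const, nsmul_eq_mul, ← hx2, ← hlSdef] at hcs
    have hcard_le : (S.card:ℝ) ≤ (s:ℝ) := by exact_mod_cast hScard_le
    have h2 : ℓS^2 ≤ (Real.sqrt s * t)^2 := by
      calc ℓS^2 ≤ (S.card:ℝ) * 1 * t^2 := hcs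
        _ = (S.card:ℝ) * t^2 := by ring
        _ ≤ (s:ℝ) * t^2 := mul_le_mul_of_nonneg_right hcard_le (sq_nonneg _)
        _ = (Real.sqrt s * t)^2 := by rw [mul_pow, Real.sq_sqrt hsR.le]
    calc ℓS = Real.sqrt (ℓS^2) := (Real.sqrt_sq hlS0).symm
      _ ≤ Real.sqrt ((Real.sqrt s * t)^2) := Real.sqrt_le_sqrt h2
      _ = Real.sqrt s * t := Real.sqrt_sq (by positivity)
  have hse : Real.sqrt s * e = 2*σ := by
    rw [hedef, mul_comm, div_mul_eq_mul_div, mul_div_assoc, div_self hsqs0.ne', mul_one]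
  have hsα2 : (s:ℝ) * α^2 ≤ (t + e)^2 := by
    have h1 : (s:ℝ) * α^2 = (ℓS + 2*σ)^2 / s := by
      rw [hαdef]; field_simp
    have h2 : ℓS + 2*σ ≤ Real.sqrt s * (t + e) := by
      rw [mul_add, hse]
      linarith only [hlS_t]
    have h3 : (ℓS + 2*σ)^2 ≤ (s:ℝ) * (t+e)^2 := by
      have hnn : 0 ≤ ℓS + 2*σ := by linarith only [hlS0, hσ0]
      have hmm := mul_self_le_mul_self hnn h2
      calc (ℓS + 2*σ)^2 = (ℓS + 2*σ) * (ℓS + 2*σ) := pow_two _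
        _ ≤ (Real.sqrt s * (t+e)) * (Real.sqrt s * (t+e)) := hmm
        _ = (s:ℝ) * (t+e)^2 := by linear_combination (t+e)^2 * hsqs
    rw [h1, div_le_iff₀ hsR]
    calc (ℓS + 2*σ)^2 ≤ (s:ℝ) * (t+e)^2 := h3
      _ = (t+e)^2 * s := by ring
  -- central quadratic inequality
  have hq : t^2 ≤ ((8*Real.sqrt (1+ρ)*η + 4*ρ*e)/K) * t + (2*ρ/K)*e^2 := by
    have h1 : 4*((l2norm (D.mulVec x))^2 - rdot (D.mulVec x) (D.mulVec h)) ≤ A := by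
      rw [← hsum_eq]; exact hsum_le
    have h2 : (1-ρ)*t^2 ≤ (l2norm (D.mulVec x))^2 := by
      have := hRIPx.1; rw [← htdef] at this; exact this
    have hmul2 : 2*ρ*((s:ℝ)*α^2) ≤ 2*ρ*(t+e)^2 :=
      mul_le_mul_of_nonneg_left hsα2 (by linarith only [hρ0] : (0:ℝ) ≤ 2*ρ)
    have h5 : K * t^2 ≤ (8*Real.sqrt (1+ρ)*η + 4*ρ*e)*t + 2*ρ*e^2 := by
      rw [hKdef]
      rw [hA] at h1
      linarith only [h1, h2, hdot, hmul2]
    have hrw : ((8*Real.sqrt (1+ρ)*η + 4*ρ*e)/K) * t + (2*ρ/K)*e^2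
        = ((8*Real.sqrt (1+ρ)*η + 4*ρ*e)*t + 2*ρ*e^2)/K := by ring
    rw [hrw, le_div_iff₀ hKpos]
    calc t^2 * K = K * t^2 := by ring
      _ ≤ _ := h5
  have hb0 : 0 ≤ (8*Real.sqrt (1+ρ)*η + 4*ρ*e)/K := by
    apply div_nonneg _ hKpos.le
    have ha := mul_nonneg (by positivity : (0:ℝ) ≤ 8*Real.sqrt (1+ρ)) hη
    have hb := mul_nonneg (mul_nonneg (by norm_num : (0:ℝ) ≤ 4) hρ0) he0
    linarith only [ha, hb]
  have hc0 : 0 ≤ (2*ρ/K)*e^2 :=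
    mul_nonneg (div_nonneg (by linarith only [hρ0]) hKpos.le) (sq_nonneg _)
  have ht_bound := quad_root_bound ht0 hb0 hc0 hq
  have hsqrt_c : Real.sqrt ((2*ρ/K)*e^2) = Real.sqrt (2*ρ/K) * e := by
    rw [Real.sqrt_mul (div_nonneg (by linarith only [hρ0]) hKpos.le), Real.sqrt_sq he0]
  have htb : t ≤ C2*η + Ce*e := by
    rw [hsqrt_c] at ht_bound
    have hexp : (8*Real.sqrt (1+ρ)*η + 4*ρ*e)/K = C2*η + (4*ρ/K)*e := by
      rw [hC2def]; field_simp
    rw [hexp] at ht_bound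
    rw [hCedef]
    linarith only [ht_bound]
  have htl2 : l2norm tl ≤ t + e := by
    have h1 : (l2norm tl)^2 ≤ (t+e)^2 := by
      rw [l2norm_sq]
      calc ∑ k, (tl k)^2 ≤ ∑ k, α * |tl k| :=
            Finset.sum_le_sum (fun k _ => by
              nlinarith only [htl_inf k, abs_nonneg (tl k), sq_abs (tl k)])
        _ = α * ∑ k, |tl k| := by rw [Finset.mul_sum]
        _ ≤ α * ((s:ℝ)*α) := mul_le_mul_of_nonneg_left htl_l1 hα0
        _ = (s:ℝ) * α^2 := by ring
        _ ≤ (t+e)^2 := hsα2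
    calc l2norm tl = Real.sqrt ((l2norm tl)^2) := (Real.sqrt_sq (l2norm_nonneg _)).symm
      _ ≤ Real.sqrt ((t+e)^2) := Real.sqrt_le_sqrt h1
      _ = t + e := Real.sqrt_sq (by linarith only [ht0, he0])
  have hl2h : l2norm h ≤ 2*t + e := by
    rw [hxtl]
    have h2 := l2norm_add_le x tl
    rw [← htdef] at h2
    linarith only [h2, htl2]
  constructor
  · have hee : (2*Ce+1)*e = (4*Ce+2)/Real.sqrt s * σ := by
      rw [hedef]
      field_simp
      ring
    have : l2norm h ≤ 2*(C2*η + Ce*e) + e := by linarith only [hl2h, htb, hCe0]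
    calc l2norm h ≤ 2*(C2*η + Ce*e) + e := this
      _ = (2*Ce+1)*e + 2*C2*η := by ring
      _ = (4*Ce+2)/Real.sqrt s * σ + 2*C2*η := by rw [hee]
  · have hl1h : l1norm h ≤ 2*ℓS + 2*σ := by
      rw [← hl1split S h, ← hlSdef]
      linarith only [hcone]
    have h1 : Real.sqrt s * t ≤ Real.sqrt s * (C2*η + Ce*e) :=
      mul_le_mul_of_nonneg_left htb hsqs0.le
    have h2 : Real.sqrt s * (C2*η + Ce*e) = C2*η*Real.sqrt s + Ce*(2*σ) := by
      rw [mul_add]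
      rw [show Real.sqrt s * (Ce*e) = Ce*(Real.sqrt s * e) by ring, hse]
      ring
    calc l1norm h ≤ 2*ℓS + 2*σ := hl1h
      _ ≤ 2*(Real.sqrt s * t) + 2*σ := by linarith only [hlS_t]
      _ ≤ 2*(C2*η*Real.sqrt s + Ce*(2*σ)) + 2*σ := by
          rw [← h2]; linarith only [h1]
      _ = (4*Ce+2)*σ + 2*C2*η*Real.sqrt s := by ring
end

section
/- Let d ≥ 1 and l ≥ 0 be integers and let M ≥ 0 be a real number. Then the number of multi-indices i = (i₁,…,i_d) ∈ ℕᵈ such that exactly l of the entries i_k are nonzero and ∑_{k=1}^d k²·i_k ≤ M is at most (M·π²/6)^l / l!. -/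
open scoped Classical

/-- The weighted total order `S(i) = ∑_{k=1}^d k²·i_k` of a multi-index `i ∈ ℕᵈ`
(with `k` ranging over `1,…,d`). -/
def weightedOrder {d : ℕ} (i : Fin d → ℕ) : ℕ := ∑ k : Fin d, ((k : ℕ) + 1) ^ 2 * i k



-- esymm key step
lemma esymm_step {ι : Type*} [DecidableEq ι] (s : Finset ι) (a : ι → ℝ) (ha : ∀ k, 0 ≤ a k) (l : ℕ) :
    (l + 1 : ℝ) * ∑ T ∈ s.powersetCard (l+1), ∏ k ∈ T, a k ≤
      (∑ k ∈ s, a k) * ∑ T ∈ s.powersetCard l, ∏ k ∈ T, a k := by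
  have h1 : (l + 1 : ℝ) * ∑ T ∈ s.powersetCard (l+1), ∏ k ∈ T, a k
      = ∑ T ∈ s.powersetCard (l+1), ∑ k ∈ T, a k * ∏ j ∈ T.erase k, a j := by
    rw [Finset.mul_sum]
    refine Finset.sum_congr rfl fun T hT => ?_
    rw [Finset.mem_powersetCard] at hT
    have : ∀ k ∈ T, a k * ∏ j ∈ T.erase k, a j = ∏ j ∈ T, a j := by
      intro k hk; exact Finset.mul_prod_erase T a hk
    rw [Finset.sum_congr rfl this, Finset.sum_const, hT.2, nsmul_eq_mul]
    push_cast; ring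
  rw [h1]
  have h2 : ∑ T ∈ s.powersetCard (l+1), ∑ k ∈ T, a k * ∏ j ∈ T.erase k, a j
      = ∑ T ∈ s.powersetCard l, ∑ k ∈ s \ T, a k * ∏ j ∈ T, a j := by
    rw [Finset.sum_sigma', Finset.sum_sigma']
    refine Finset.sum_bij' (fun p _ => ⟨p.1.erase p.2, p.2⟩) (fun p _ => ⟨insert p.2 p.1, p.2⟩)
      ?_ ?_ ?_ ?_ ?_
    · rintro ⟨T, k⟩ hp
      simp only [Finset.mem_sigma, Finset.mem_powersetCard] at hp ⊢
      obtain ⟨⟨hTs, hTc⟩, hk⟩ := hp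
      refine ⟨⟨(Finset.erase_subset _ _).trans hTs, ?_⟩, Finset.mem_sdiff.2 ⟨hTs hk, Finset.notMem_erase _ _⟩⟩
      rw [Finset.card_erase_of_mem hk, hTc]
      omega
    · rintro ⟨T, k⟩ hp
      simp only [Finset.mem_sigma, Finset.mem_powersetCard, Finset.mem_sdiff] at hp ⊢
      obtain ⟨⟨hTs, hTc⟩, hks, hkT⟩ := hp
      refine ⟨⟨Finset.insert_subset hks hTs, ?_⟩, Finset.mem_insert_self _ _⟩
      rw [Finset.card_insert_of_notMem hkT, hTc]
    · rintro ⟨T, k⟩ hp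
      simp only [Finset.mem_sigma, Finset.mem_powersetCard] at hp
      simp [Finset.insert_erase hp.2]
    · rintro ⟨T, k⟩ hp
      simp only [Finset.mem_sigma, Finset.mem_powersetCard, Finset.mem_sdiff] at hp
      simp [Finset.erase_insert hp.2.2]
    · rintro ⟨T, k⟩ hp
      simp
  rw [h2]
  calc ∑ T ∈ s.powersetCard l, ∑ k ∈ s \ T, a k * ∏ j ∈ T, a j
      ≤ ∑ T ∈ s.powersetCard l, ∑ k ∈ s, a k * ∏ j ∈ T, a j := by
        refine Finset.sum_le_sum fun T _ => ?_
        refine Finset.sum_le_sum_of_subset_of_nonneg (Finset.sdiff_subset) fun k _ _ => ?_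
        exact mul_nonneg (ha k) (Finset.prod_nonneg fun j _ => ha j)
    _ = (∑ k ∈ s, a k) * ∑ T ∈ s.powersetCard l, ∏ k ∈ T, a k := by
        rw [Finset.mul_sum]
        exact Finset.sum_congr rfl fun T _ => (Finset.sum_mul ..).symm

lemma esymm_le_pow {ι : Type*} [DecidableEq ι] (s : Finset ι) (a : ι → ℝ) (ha : ∀ k, 0 ≤ a k) :
    ∀ l : ℕ, (∑ T ∈ s.powersetCard l, ∏ k ∈ T, a k) * (Nat.factorial l : ℝ) ≤ (∑ k ∈ s, a k) ^ l := by
  intro l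
  induction l with
  | zero => simp
  | succ l ih =>
    have hE : 0 ≤ ∑ T ∈ s.powersetCard (l+1), ∏ k ∈ T, a k :=
      Finset.sum_nonneg fun T _ => Finset.prod_nonneg fun k _ => ha k
    have hp : 0 ≤ ∑ k ∈ s, a k := Finset.sum_nonneg fun k _ => ha k
    have key := esymm_step s a ha l
    calc (∑ T ∈ s.powersetCard (l+1), ∏ k ∈ T, a k) * (Nat.factorial (l+1) : ℝ)
        = ((l + 1 : ℝ) * ∑ T ∈ s.powersetCard (l+1), ∏ k ∈ T, a k) * (Nat.factorial l : ℝ) := by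
          rw [Nat.factorial_succ]; push_cast; ring
      _ ≤ ((∑ k ∈ s, a k) * ∑ T ∈ s.powersetCard l, ∏ k ∈ T, a k) * (Nat.factorial l : ℝ) := by
          exact mul_le_mul_of_nonneg_right key (Nat.cast_nonneg _)
      _ = (∑ k ∈ s, a k) * ((∑ T ∈ s.powersetCard l, ∏ k ∈ T, a k) * (Nat.factorial l : ℝ)) := by ring
      _ ≤ (∑ k ∈ s, a k) * (∑ k ∈ s, a k) ^ l := mul_le_mul_of_nonneg_left ih hp
      _ = (∑ k ∈ s, a k) ^ (l + 1) := (pow_succ' _ _).symm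

/-- The number of multi-indices `i ∈ ℕᵈ` with exactly `l` nonzero entries and
`∑ k²·i_k ≤ M` is at most `(Mπ²/6)^l / l!`. -/
theorem count_multiindices_with_support_size
    (d l : ℕ) (hd : 1 ≤ d) (M : ℝ) (hM : 0 ≤ M) :
    (Nat.card {i : Fin d → ℕ |
        (Finset.univ.filter fun k => i k ≠ 0).card = l ∧ (weightedOrder i : ℝ) ≤ M} : ℝ) ≤
      (M * Real.pi ^ 2 / 6) ^ l / (Nat.factorial l : ℝ) := by
  set S := {i : Fin d → ℕ |
      (Finset.univ.filter fun k => i k ≠ 0).card = l ∧ (weightedOrder i : ℝ) ≤ M} with hS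
  set a : Fin d → ℝ := fun k => M / ((k : ℕ) + 1 : ℝ) ^ 2 with ha
  have ha0 : ∀ k, 0 ≤ a k := fun k => div_nonneg hM (by positivity)
  set m : Fin d → ℕ := fun k => ⌊a k⌋₊ with hmdef
  have hma : ∀ k, (m k : ℝ) ≤ a k := fun k => Nat.floor_le (ha0 k)
  -- every element of S is bounded coordinatewise by m
  have hbound : ∀ i ∈ S, ∀ k, i k ≤ m k := by
    intro i hi k
    have h1 : ((k : ℕ) + 1) ^ 2 * i k ≤ weightedOrder i :=
      Finset.single_le_sum (f := fun j : Fin d => ((j : ℕ) + 1) ^ 2 * i j)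
        (fun _ _ => Nat.zero_le _) (Finset.mem_univ k)
    have h2 : (((k : ℕ) + 1 : ℝ)) ^ 2 * (i k : ℝ) ≤ M := by
      calc (((k : ℕ) + 1 : ℝ)) ^ 2 * (i k : ℝ) = ((((k : ℕ) + 1) ^ 2 * i k : ℕ) : ℝ) := by
            push_cast; ring
        _ ≤ (weightedOrder i : ℝ) := by exact_mod_cast h1
        _ ≤ M := hi.2
    have h3 : (i k : ℝ) ≤ a k := by
      rw [ha]
      rw [le_div_iff₀ (by positivity)]
      linarith [h2]
    exact Nat.le_floor h3
  -- the fiber finsets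
  set fib : Finset (Fin d) → Finset (Fin d → ℕ) :=
    fun T => Fintype.piFinset fun k => if k ∈ T then Finset.Icc 1 (m k) else {0} with hfib
  set G : Finset (Fin d → ℕ) := (Finset.univ.powersetCard l).biUnion fib with hG
  have hSG : S ⊆ ↑G := by
    intro i hi
    rw [Finset.mem_coe, hG, Finset.mem_biUnion]
    refine ⟨Finset.univ.filter fun k => i k ≠ 0, ?_, ?_⟩
    · exact Finset.mem_powersetCard.2 ⟨Finset.subset_univ _, hi.1⟩
    · rw [hfib]
      refine Fintype.mem_piFinset.2 fun k => ?_
      by_cases hk : i k = 0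
      · simp [hk]
      · simp only [Finset.mem_filter, Finset.mem_univ, true_and]
        rw [if_pos hk]
        exact Finset.mem_Icc.2 ⟨Nat.one_le_iff_ne_zero.2 hk, hbound i hi k⟩
  have h1 : (Nat.card S : ℝ) ≤ (G.card : ℝ) := by
    have := Set.ncard_le_ncard hSG G.finite_toSet
    rw [Set.ncard_coe_finset] at this
    rw [Nat.card_coe_set_eq]
    exact_mod_cast this
  have hfibcard : ∀ T, (fib T).card = ∏ k ∈ T, m k := by
    intro T
    rw [hfib]
    rw [Fintype.card_piFinset]
    have : ∀ k : Fin d, (if k ∈ T then Finset.Icc 1 (m k) else {0}).card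
        = if k ∈ T then m k else 1 := by
      intro k
      by_cases hk : k ∈ T <;> simp [hk]
    rw [Finset.prod_congr rfl fun k _ => this k, Finset.prod_ite_mem, Finset.univ_inter]
  have h2 : (G.card : ℝ) ≤ ∑ T ∈ Finset.univ.powersetCard l, ∏ k ∈ T, (m k : ℝ) := by
    have := Finset.card_biUnion_le (s := Finset.univ.powersetCard l) (t := fib)
    calc (G.card : ℝ) ≤ ((∑ T ∈ Finset.univ.powersetCard l, (fib T).card : ℕ) : ℝ) := by
          exact_mod_cast this
      _ = ∑ T ∈ Finset.univ.powersetCard l, ∏ k ∈ T, (m k : ℝ) := by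
          push_cast [hfibcard]; rfl
  have h3 : ∑ T ∈ Finset.univ.powersetCard l, ∏ k ∈ T, (m k : ℝ)
      ≤ ∑ T ∈ Finset.univ.powersetCard l, ∏ k ∈ T, a k := by
    refine Finset.sum_le_sum fun T _ => ?_
    exact Finset.prod_le_prod (fun k _ => Nat.cast_nonneg _) (fun k _ => hma k)
  -- the sum of weights is at most M π²/6
  have hsum : ∑ k : Fin d, a k ≤ M * Real.pi ^ 2 / 6 := by
    have hb : ∑ k : Fin d, (1 : ℝ) / ((k : ℕ) + 1 : ℝ) ^ 2 ≤ Real.pi ^ 2 / 6 := by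
      have hz := hasSum_zeta_two
      have hle : ∑ n ∈ Finset.range (d + 1), (1 : ℝ) / (n : ℝ) ^ 2 ≤ Real.pi ^ 2 / 6 :=
        sum_le_hasSum _ (fun n _ => by positivity) hz
      rw [Finset.sum_range_succ'] at hle
      rw [Fin.sum_univ_eq_sum_range (fun n => (1 : ℝ) / ((n : ℕ) + 1 : ℝ) ^ 2)]
      norm_num at hle
      push_cast at hle
      simpa [one_div] using hle
    calc ∑ k : Fin d, a k = M * ∑ k : Fin d, (1 : ℝ) / ((k : ℕ) + 1 : ℝ) ^ 2 := by
          rw [Finset.mul_sum]; exact Finset.sum_congr rfl fun k _ => by rw [ha]; ring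
      _ ≤ M * (Real.pi ^ 2 / 6) := mul_le_mul_of_nonneg_left hb hM
      _ = M * Real.pi ^ 2 / 6 := by ring
  have hEl := esymm_le_pow Finset.univ a ha0 l
  have hfac : (0 : ℝ) < (Nat.factorial l : ℝ) := by exact_mod_cast Nat.factorial_pos l
  have hsum0 : 0 ≤ ∑ k : Fin d, a k := Finset.sum_nonneg fun k _ => ha0 k
  have h4 : ∑ T ∈ Finset.univ.powersetCard l, ∏ k ∈ T, a k
      ≤ (M * Real.pi ^ 2 / 6) ^ l / (Nat.factorial l : ℝ) := by
    rw [le_div_iff₀ hfac]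
    calc (∑ T ∈ Finset.univ.powersetCard l, ∏ k ∈ T, a k) * (Nat.factorial l : ℝ)
        ≤ (∑ k : Fin d, a k) ^ l := hEl
      _ ≤ (M * Real.pi ^ 2 / 6) ^ l := pow_le_pow_left₀ hsum0 hsum l
  linarith [h1, h2, h3, h4]
end

section
/- Let d ≥ 1 be an integer and let M ≥ 0 be a real number. Then the number of multi-indices i = (i₁,…,i_d) ∈ ℕᵈ with ∑_{k=1}^d k²·i_k ≤ M is at most exp(M·π²/6). In particular this bound does not depend on the dimension d. -/
/-- The number of multi-indices `i ∈ ℕᵈ` with `∑ k²·i_k ≤ M` is at most `exp(Mπ²/6)`,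
a bound independent of the dimension `d`. -/
theorem count_anisotropic_basis_dimension_free
    (d : ℕ) (hd : 1 ≤ d) (M : ℝ) (hM : 0 ≤ M) :
    (Nat.card {i : Fin d → ℕ | (weightedOrder i : ℝ) ≤ M} : ℝ) ≤
      Real.exp (M * Real.pi ^ 2 / 6) := by
  classical
  set m : Fin d → ℕ := fun k => ⌊M / (((k : ℕ) + 1) ^ 2 : ℝ)⌋₊ with hm
  -- each coordinate of an admissible index is bounded
  have hbound : ∀ i : Fin d → ℕ, (weightedOrder i : ℝ) ≤ M → ∀ k, i k ≤ m k := by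
    intro i hi k
    have hterm : (((k : ℕ) + 1) ^ 2 * i k : ℕ) ≤ weightedOrder i := by
      unfold weightedOrder
      exact Finset.single_le_sum (f := fun (j : Fin d) => ((j : ℕ) + 1) ^ 2 * i j) (fun j _ => Nat.zero_le _) (Finset.mem_univ k)
    have hterm' : ((((k : ℕ) + 1) ^ 2 * i k : ℕ) : ℝ) ≤ M := le_trans (by exact_mod_cast hterm) hi
    have hpos : (0 : ℝ) < (((k : ℕ) + 1) ^ 2 : ℝ) := by positivity
    have : (i k : ℝ) ≤ M / (((k : ℕ) + 1) ^ 2 : ℝ) := by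
      rw [le_div_iff₀ hpos]
      push_cast at hterm' ⊢
      linarith
    exact Nat.le_floor this
  -- injection into a finite product of boxes
  let f : {i : Fin d → ℕ | (weightedOrder i : ℝ) ≤ M} → (∀ k : Fin d, Fin (m k + 1)) :=
    fun i k => ⟨i.1 k, Nat.lt_succ_of_le (hbound i.1 i.2 k)⟩
  have hf : Function.Injective f := by
    intro a b hab
    ext k
    have := congrFun hab k
    simpa [f, Fin.ext_iff] using this
  have hcard : Nat.card {i : Fin d → ℕ | (weightedOrder i : ℝ) ≤ M} ≤ ∏ k : Fin d, (m k + 1) := by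
    have := Nat.card_le_card_of_injective f hf
    simpa [Nat.card_eq_fintype_card, Fintype.card_pi] using this
  have step1 : (Nat.card {i : Fin d → ℕ | (weightedOrder i : ℝ) ≤ M} : ℝ)
      ≤ ∏ k : Fin d, ((m k : ℝ) + 1) := by
    calc (Nat.card {i : Fin d → ℕ | (weightedOrder i : ℝ) ≤ M} : ℝ)
        ≤ ((∏ k : Fin d, (m k + 1) : ℕ) : ℝ) := by exact_mod_cast hcard
      _ = ∏ k : Fin d, ((m k : ℝ) + 1) := by
          push_cast
          exact Finset.prod_congr rfl fun _ _ => by ring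
  have step2 : ∏ k : Fin d, ((m k : ℝ) + 1)
      ≤ ∏ k : Fin d, Real.exp (M / (((k : ℕ) + 1) ^ 2 : ℝ)) := by
    apply Finset.prod_le_prod
    · intro k _; positivity
    · intro k _
      have h1 : (m k : ℝ) ≤ M / (((k : ℕ) + 1) ^ 2 : ℝ) :=
        Nat.floor_le (by positivity)
      have h2 : M / (((k : ℕ) + 1) ^ 2 : ℝ) + 1 ≤ Real.exp (M / (((k : ℕ) + 1) ^ 2 : ℝ)) := by
        have := Real.add_one_le_exp (M / (((k : ℕ) + 1) ^ 2 : ℝ))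
        linarith
      linarith
  have step3 : ∏ k : Fin d, Real.exp (M / (((k : ℕ) + 1) ^ 2 : ℝ))
      = Real.exp (∑ k : Fin d, M / (((k : ℕ) + 1) ^ 2 : ℝ)) := (Real.exp_sum _ _).symm
  have hsum : ∑ k : Fin d, M / (((k : ℕ) + 1) ^ 2 : ℝ) ≤ M * Real.pi ^ 2 / 6 := by
    have hs : ∑ k : Fin d, (1 : ℝ) / (((k : ℕ) + 1) ^ 2 : ℝ) ≤ Real.pi ^ 2 / 6 := by
      have h0 : ∑ k : Fin d, (1 : ℝ) / (((k : ℕ) + 1) ^ 2 : ℝ)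
          = ∑ n ∈ Finset.range d, (1 : ℝ) / ((n : ℝ) + 1) ^ 2 :=
        Fin.sum_univ_eq_sum_range (fun n => (1 : ℝ) / ((n : ℝ) + 1) ^ 2) d
      have h1 : ∑ n ∈ Finset.range (d + 1), (1 : ℝ) / (n : ℝ) ^ 2
          = ∑ n ∈ Finset.range d, (1 : ℝ) / ((n : ℝ) + 1) ^ 2 := by
        rw [Finset.sum_range_succ' (fun n => (1 : ℝ) / (n : ℝ) ^ 2) d]
        push_cast
        simp
      rw [h0, ← h1]
      exact sum_le_hasSum _ (fun n _ => by positivity) hasSum_zeta_two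
    calc ∑ k : Fin d, M / (((k : ℕ) + 1) ^ 2 : ℝ)
        = M * ∑ k : Fin d, (1 : ℝ) / (((k : ℕ) + 1) ^ 2 : ℝ) := by
          rw [Finset.mul_sum]; congr 1; ext k; ring
      _ ≤ M * (Real.pi ^ 2 / 6) := by
          exact mul_le_mul_of_nonneg_left hs hM
      _ = M * Real.pi ^ 2 / 6 := by ring
  calc (Nat.card {i : Fin d → ℕ | (weightedOrder i : ℝ) ≤ M} : ℝ)
      ≤ ∏ k : Fin d, ((m k : ℝ) + 1) := step1
    _ ≤ ∏ k : Fin d, Real.exp (M / (((k : ℕ) + 1) ^ 2 : ℝ)) := step2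
    _ = Real.exp (∑ k : Fin d, M / (((k : ℕ) + 1) ^ 2 : ℝ)) := step3
    _ ≤ Real.exp (M * Real.pi ^ 2 / 6) := Real.exp_le_exp.mpr hsum
end

section
/- For all real α > 0 and B > 0 there exists ν > 0, depending only on α and B, such that the following holds: for every integer d ≥ 1, every family of real coefficients c : ℕᵈ → ℝ satisfying |c_i| ≤ B·exp(−α·∑_{k=1}^d k²·i_k) for every multi-index i ∈ ℕᵈ, every ε ∈ (0, 0.9), and every real M ≥ −ν·log ε, the family (c_i²) is summable over {i ∈ ℕᵈ : ∑_{k=1}^d k²·i_k > M} and ∑_{i : ∑_k k² i_k > M} c_i² ≤ ε. -/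
lemma weightedOrder_snoc {d : ℕ} (i : Fin d → ℕ) (n : ℕ) :
    weightedOrder (Fin.snoc i n) = weightedOrder i + (d + 1) ^ 2 * n := by
  unfold weightedOrder
  rw [Fin.sum_univ_castSucc]
  have h : (Fin.snoc i n : Fin (d+1) → ℕ) (Fin.last d) = n := by simp
  simp [Fin.snoc_castSucc, Fin.last] at h ⊢
  simp [h]

set_option maxHeartbeats 1000000 in
lemma aux_hasSum (α : ℝ) (hα : 0 < α) :
    ∀ d : ℕ, HasSum (fun i : Fin d → ℕ => Real.exp (-α * (weightedOrder i : ℝ)))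
      (∏ k : Fin d, (1 - Real.exp (-α * (((k : ℕ) + 1) ^ 2 : ℕ)))⁻¹) := by
  intro d
  induction d with
  | zero => simp [weightedOrder]
  | succ d ih =>
    set r : ℝ := Real.exp (-α * (((d : ℕ) + 1) ^ 2 : ℕ)) with hr
    have hr0 : 0 ≤ r := Real.exp_nonneg _
    have hr1 : r < 1 := by
      rw [hr]
      apply Real.exp_lt_one_iff.mpr
      have : (0:ℝ) < (((d:ℕ)+1)^2 : ℕ) := by positivity
      nlinarith
    have hgeo : HasSum (fun n : ℕ => r ^ n) (1 - r)⁻¹ :=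
      hasSum_geometric_of_lt_one hr0 hr1
    have hmulsum : Summable fun p : ℕ × (Fin d → ℕ) =>
        r ^ p.1 * Real.exp (-α * (weightedOrder p.2 : ℝ)) :=
      hgeo.summable.mul_of_nonneg ih.summable (fun n => pow_nonneg hr0 n)
        (fun _ => Real.exp_nonneg _)
    have hmul : HasSum (fun p : ℕ × (Fin d → ℕ) =>
        r ^ p.1 * Real.exp (-α * (weightedOrder p.2 : ℝ)))
        ((1 - r)⁻¹ * ∏ k : Fin d, (1 - Real.exp (-α * (((k : ℕ) + 1) ^ 2 : ℕ)))⁻¹) :=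
      hgeo.mul ih hmulsum
    rw [← (Fin.snocEquiv (fun _ : Fin (d+1) => ℕ)).hasSum_iff]
    have hfe : ((fun i : Fin (d+1) → ℕ => Real.exp (-α * (weightedOrder i : ℝ)))
          ∘ (Fin.snocEquiv (fun _ : Fin (d+1) => ℕ)))
        = fun p : ℕ × (Fin d → ℕ) =>
            r ^ p.1 * Real.exp (-α * (weightedOrder p.2 : ℝ)) := by
      funext p
      have he : (Fin.snocEquiv (fun _ : Fin (d+1) => ℕ)) p = Fin.snoc p.2 p.1 := by
        funext k
        simp [Fin.snocEquiv]
      simp only [Function.comp_apply, he, weightedOrder_snoc]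
      push_cast
      rw [mul_add, Real.exp_add, mul_comm]
      congr 1
      rw [hr]
      rw [← Real.exp_nat_mul]
      congr 1
      push_cast
      ring
    rw [hfe]
    convert hmul using 1
    rw [Fin.prod_univ_castSucc, mul_comm]

    simp [Fin.last]
    refine Or.inl ?_
    rw [hr]
    push_cast
    ring_nf


lemma prod_bound (α : ℝ) (hα : 0 < α) (d : ℕ) :
    ∏ k : Fin d, (1 - Real.exp (-α * (((k : ℕ) + 1) ^ 2 : ℕ)))⁻¹
      ≤ Real.exp (Real.exp (-α) / (1 - Real.exp (-α)) ^ 2) := by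
  set q : ℝ := Real.exp (-α) with hq
  have hq0 : 0 < q := Real.exp_pos _
  have hq1 : q < 1 := Real.exp_lt_one_iff.mpr (by linarith)
  have h1q : 0 < 1 - q := by linarith
  have hxval : ∀ k : Fin d,
      Real.exp (-α * ((((k : ℕ) + 1) ^ 2 : ℕ) : ℝ)) = q ^ (((k : ℕ) + 1) ^ 2) := by
    intro k
    rw [hq, ← Real.exp_nat_mul]
    congr 1
    push_cast
    ring
  have hfac : ∀ k : Fin d,
      (1 - Real.exp (-α * ((((k : ℕ) + 1) ^ 2 : ℕ) : ℝ)))⁻¹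
        ≤ Real.exp (q ^ ((k : ℕ) + 1) / (1 - q)) := by
    intro k
    set x : ℝ := Real.exp (-α * ((((k : ℕ) + 1) ^ 2 : ℕ) : ℝ)) with hx
    have hx0 : 0 < x := Real.exp_pos _
    have hxle : x ≤ q ^ ((k : ℕ) + 1) := by
      rw [hx, hxval k]
      exact pow_le_pow_of_le_one hq0.le hq1.le (Nat.le_self_pow (by norm_num) _)
    have hqk : q ^ ((k : ℕ) + 1) ≤ q := by
      calc q ^ ((k : ℕ) + 1) ≤ q ^ 1 := pow_le_pow_of_le_one hq0.le hq1.le (by omega)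
      _ = q := pow_one q
    have hxq : x ≤ q := hxle.trans hqk
    have h1x : 0 < 1 - x := by linarith
    have step1 : (1 - x)⁻¹ ≤ 1 + x / (1 - q) := by
      rw [inv_le_iff_one_le_mul₀ h1x]
      have key : x / (1 - q) * (1 - x) ≥ x := by
        rw [ge_iff_le, div_mul_eq_mul_div, le_div_iff₀ h1q]
        nlinarith
      nlinarith
    have step2 : 1 + x / (1 - q) ≤ 1 + q ^ ((k : ℕ) + 1) / (1 - q) := by
      gcongr
    have step3 : 1 + q ^ ((k : ℕ) + 1) / (1 - q) ≤ Real.exp (q ^ ((k : ℕ) + 1) / (1 - q)) := by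
      have := Real.add_one_le_exp (q ^ ((k : ℕ) + 1) / (1 - q))
      linarith
    linarith
  calc ∏ k : Fin d, (1 - Real.exp (-α * ((((k : ℕ) + 1) ^ 2 : ℕ) : ℝ)))⁻¹
      ≤ ∏ k : Fin d, Real.exp (q ^ ((k : ℕ) + 1) / (1 - q)) := by
        apply Finset.prod_le_prod
        · intro k _
          have hx1 : Real.exp (-α * ((((k : ℕ) + 1) ^ 2 : ℕ) : ℝ)) < 1 := by
            apply Real.exp_lt_one_iff.mpr
            have : (0:ℝ) < ((((k : ℕ) + 1) ^ 2 : ℕ) : ℝ) := by positivity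
            nlinarith
          have := Real.exp_pos (-α * ((((k : ℕ) + 1) ^ 2 : ℕ) : ℝ))
          have h1 : 0 < 1 - Real.exp (-α * ((((k : ℕ) + 1) ^ 2 : ℕ) : ℝ)) := by linarith
          positivity
        · exact fun k _ => hfac k
    _ = Real.exp (∑ k : Fin d, q ^ ((k : ℕ) + 1) / (1 - q)) := by
        rw [Real.exp_sum]
    _ ≤ Real.exp (q / (1 - q) ^ 2) := by
        apply Real.exp_le_exp.mpr
        rw [← Finset.sum_div]
        rw [div_le_div_iff₀ h1q (by positivity)]
        have hsum : ∑ k : Fin d, q ^ ((k : ℕ) + 1) ≤ q / (1 - q) := by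
          have h1 : ∑ k : Fin d, q ^ ((k : ℕ) + 1) = q * ∑ k ∈ Finset.range d, q ^ k := by
            rw [Finset.mul_sum, Fin.sum_univ_eq_sum_range (fun k => q ^ (k + 1))]
            exact Finset.sum_congr rfl (fun k _ => by ring)
          have h2 : ∑ k ∈ Finset.range d, q ^ k ≤ (1 - q)⁻¹ := by
            have := Summable.sum_le_tsum (Finset.range d) (fun k _ => pow_nonneg hq0.le k)
              (summable_geometric_of_lt_one hq0.le hq1)
            rwa [tsum_geometric_of_lt_one hq0.le hq1] at this
          rw [h1, div_eq_mul_inv]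
          exact mul_le_mul_of_nonneg_left h2 hq0.le
        calc (∑ k : Fin d, q ^ ((k : ℕ) + 1)) * (1 - q) ^ 2
            ≤ (q / (1 - q)) * (1 - q) ^ 2 := by
              apply mul_le_mul_of_nonneg_right hsum (by positivity)
          _ = q * (1 - q) := by field_simp


set_option maxHeartbeats 1000000 in
/-- Lemma 4.6 (truncation tail bound): for exponentially decaying coefficients
`|c_i| ≤ B·exp(−α·S(i))`, there is `ν > 0` depending only on `α` and `B` such that for every
`ε ∈ (0, 0.9)` and every `M ≥ −ν·log ε`, the tail mean-squared truncation error over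
`{i : S(i) > M}` is summable and at most `ε`, uniformly in the dimension `d`. -/
theorem truncation_tail_bound :
    ∀ α B : ℝ, 0 < α → 0 < B →
    ∃ ν : ℝ, 0 < ν ∧
      ∀ d : ℕ, 1 ≤ d →
      ∀ c : (Fin d → ℕ) → ℝ,
      (∀ i : Fin d → ℕ, |c i| ≤ B * Real.exp (-α * (weightedOrder i : ℝ))) →
      ∀ ε : ℝ, 0 < ε → ε < 0.9 →
      ∀ M : ℝ, -ν * Real.log ε ≤ M →
        Summable (fun i : {i : Fin d → ℕ // M < (weightedOrder i : ℝ)} => (c i.1) ^ 2) ∧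
          ∑' i : {i : Fin d → ℕ // M < (weightedOrder i : ℝ)}, (c i.1) ^ 2 ≤ ε := by
  intro α B hα hB
  set C : ℝ := Real.exp (Real.exp (-α) / (1 - Real.exp (-α)) ^ 2) with hC
  have hC1 : 1 ≤ C := by
    rw [hC, ← Real.exp_zero]
    apply Real.exp_le_exp.mpr
    have h1 : Real.exp (-α) < 1 := Real.exp_lt_one_iff.mpr (by linarith)
    have h2 : 0 < Real.exp (-α) := Real.exp_pos _
    positivity
  set K : ℝ := B ^ 2 * C with hK
  have hK0 : 0 < K := by positivity
  set L : ℝ := -Real.log (0.9 : ℝ) with hL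
  have hL0 : 0 < L := by
    rw [hL]
    have : Real.log (0.9 : ℝ) < 0 := Real.log_neg (by norm_num) (by norm_num)
    linarith
  set t : ℝ := max 1 (Real.log K / L) with ht
  have ht1 : 1 ≤ t := le_max_left _ _
  have ht0 : 0 < t := by linarith
  refine ⟨(t + 1) / α, by positivity, ?_⟩
  intro d hd c hc ε hε hε9 M hM
  -- basic facts about ε and M
  have hu0 : 0 < -Real.log ε := by
    have : Real.log ε < Real.log (0.9 : ℝ) :=
      Real.log_lt_log hε (by exact_mod_cast hε9)
    have h09 : Real.log (0.9 : ℝ) < 0 := Real.log_neg (by norm_num) (by norm_num)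
    linarith
  set u : ℝ := -Real.log ε with hu
  have huL : L ≤ u := by
    have : Real.log ε < Real.log (0.9 : ℝ) :=
      Real.log_lt_log hε (by exact_mod_cast hε9)
    rw [hu, hL]; linarith
  have hM' : (t + 1) / α * u ≤ M := by
    calc (t + 1) / α * u = -((t + 1) / α) * Real.log ε := by rw [hu]; ring
    _ ≤ M := hM
  -- the dominating summable family
  have hdom : HasSum (fun i : Fin d → ℕ => Real.exp (-α * (weightedOrder i : ℝ)))
      (∏ k : Fin d, (1 - Real.exp (-α * (((k : ℕ) + 1) ^ 2 : ℕ)))⁻¹) := aux_hasSum α hα d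
  set P : ℝ := ∏ k : Fin d, (1 - Real.exp (-α * (((k : ℕ) + 1) ^ 2 : ℕ)))⁻¹ with hP
  have hPC : P ≤ C := prod_bound α hα d
  -- pointwise bound on the tail
  have hpt : ∀ i : {i : Fin d → ℕ // M < (weightedOrder i : ℝ)},
      (c i.1) ^ 2 ≤ (B ^ 2 * Real.exp (-α * M)) * Real.exp (-α * (weightedOrder i.1 : ℝ)) := by
    rintro ⟨i, hi⟩
    have h1 : |c i| ≤ B * Real.exp (-α * (weightedOrder i : ℝ)) := hc i
    have h2 : (c i) ^ 2 ≤ (B * Real.exp (-α * (weightedOrder i : ℝ))) ^ 2 := by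
      rw [← sq_abs]
      apply pow_le_pow_left₀ (abs_nonneg _) h1
    have h3 : Real.exp (-α * (weightedOrder i : ℝ)) ≤ Real.exp (-α * M) := by
      apply Real.exp_le_exp.mpr
      have := hi
      nlinarith
    calc (c i) ^ 2 ≤ (B * Real.exp (-α * (weightedOrder i : ℝ))) ^ 2 := h2
      _ = B ^ 2 * (Real.exp (-α * (weightedOrder i : ℝ)) * Real.exp (-α * (weightedOrder i : ℝ))) := by ring
      _ ≤ B ^ 2 * (Real.exp (-α * M) * Real.exp (-α * (weightedOrder i : ℝ))) := by
          apply mul_le_mul_of_nonneg_left _ (by positivity)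
          apply mul_le_mul_of_nonneg_right h3 (Real.exp_nonneg _)
      _ = (B ^ 2 * Real.exp (-α * M)) * Real.exp (-α * (weightedOrder i : ℝ)) := by ring
  have hmaj : Summable (fun i : {i : Fin d → ℕ // M < (weightedOrder i : ℝ)} =>
      (B ^ 2 * Real.exp (-α * M)) * Real.exp (-α * (weightedOrder i.1 : ℝ))) :=
    ((hdom.summable.subtype _).mul_left _)
  have hsummable : Summable (fun i : {i : Fin d → ℕ // M < (weightedOrder i : ℝ)} => (c i.1) ^ 2) :=
    Summable.of_nonneg_of_le (fun i => sq_nonneg _) hpt hmaj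
  refine ⟨hsummable, ?_⟩
  -- tsum bound chain
  have step1 : ∑' i : {i : Fin d → ℕ // M < (weightedOrder i : ℝ)}, (c i.1) ^ 2
      ≤ ∑' i : {i : Fin d → ℕ // M < (weightedOrder i : ℝ)},
          (B ^ 2 * Real.exp (-α * M)) * Real.exp (-α * (weightedOrder i.1 : ℝ)) :=
    Summable.tsum_le_tsum hpt hsummable hmaj
  have step2 : ∑' i : {i : Fin d → ℕ // M < (weightedOrder i : ℝ)},
          (B ^ 2 * Real.exp (-α * M)) * Real.exp (-α * (weightedOrder i.1 : ℝ))
      = (B ^ 2 * Real.exp (-α * M)) * ∑' i : {i : Fin d → ℕ // M < (weightedOrder i : ℝ)},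
          Real.exp (-α * (weightedOrder i.1 : ℝ)) := tsum_mul_left
  have step3 : ∑' i : {i : Fin d → ℕ // M < (weightedOrder i : ℝ)},
          Real.exp (-α * (weightedOrder i.1 : ℝ)) ≤ P := by
    have h := Summable.tsum_subtype_le (fun i : Fin d → ℕ => Real.exp (-α * (weightedOrder i : ℝ)))
      {i : Fin d → ℕ | M < (weightedOrder i : ℝ)} (fun _ => Real.exp_nonneg _) hdom.summable
    rw [hdom.tsum_eq] at h
    exact h
  have hfinal : (B ^ 2 * Real.exp (-α * M)) * P ≤ ε := by
    have hPle : (B ^ 2 * Real.exp (-α * M)) * P ≤ K * Real.exp (-α * M) := by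
      rw [hK]
      have h0 : 0 ≤ B ^ 2 * Real.exp (-α * M) := by positivity
      calc (B ^ 2 * Real.exp (-α * M)) * P ≤ (B ^ 2 * Real.exp (-α * M)) * C :=
            mul_le_mul_of_nonneg_left hPC h0
        _ = B ^ 2 * C * Real.exp (-α * M) := by ring
    have hMe : Real.exp (-α * M) ≤ Real.exp (-(t + 1) * u) := by
      apply Real.exp_le_exp.mpr
      have hαM : (t + 1) * u ≤ α * M := by
        have := mul_le_mul_of_nonneg_left hM' (le_of_lt hα)
        calc (t + 1) * u = α * ((t + 1) / α * u) := by field_simp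
          _ ≤ α * M := this
      linarith
    have hKe : K * Real.exp (-(t + 1) * u) ≤ ε := by
      have h1 : K * Real.exp (-(t + 1) * u) = Real.exp (Real.log K - t * u - u) := by
        rw [show Real.log K - t * u - u = Real.log K + (-(t + 1) * u) by ring,
          Real.exp_add, Real.exp_log hK0]
      have h2 : Real.log K - t * u ≤ 0 := by
        have htu : Real.log K ≤ t * u := by
          have h3 : Real.log K / L * L ≤ t * L := by
            apply mul_le_mul_of_nonneg_right (le_max_right _ _) hL0.le
          rw [div_mul_cancel₀ _ hL0.ne'] at h3
          calc Real.log K ≤ t * L := h3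
            _ ≤ t * u := mul_le_mul_of_nonneg_left huL ht0.le
        linarith
      have h4 : Real.exp (-u) = ε := by
        rw [hu, neg_neg, Real.exp_log hε]
      calc K * Real.exp (-(t + 1) * u) = Real.exp (Real.log K - t * u - u) := h1
        _ ≤ Real.exp (0 - u) := by
            apply Real.exp_le_exp.mpr; linarith
        _ = Real.exp (-u) := by ring_nf
        _ = ε := h4
    calc (B ^ 2 * Real.exp (-α * M)) * P ≤ K * Real.exp (-α * M) := hPle
      _ ≤ K * Real.exp (-(t + 1) * u) := mul_le_mul_of_nonneg_left hMe hK0.le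
      _ ≤ ε := hKe
  calc ∑' i : {i : Fin d → ℕ // M < (weightedOrder i : ℝ)}, (c i.1) ^ 2
      ≤ (B ^ 2 * Real.exp (-α * M)) * ∑' i : {i : Fin d → ℕ // M < (weightedOrder i : ℝ)},
          Real.exp (-α * (weightedOrder i.1 : ℝ)) := step2 ▸ step1
    _ ≤ (B ^ 2 * Real.exp (-α * M)) * P := by
        apply mul_le_mul_of_nonneg_left step3 (by positivity)
    _ ≤ ε := hfinal
end

section
/- For all real B > 0, α > 0 and E > 0 there exists ν ≥ 0, depending only on B, α and E, such that the following holds: for every integer d ≥ 1, every real Hilbert space H, every orthonormal family (ψ_i)_{i ∈ ℕᵈ} in H indexed by multi-indices, every square-summable family of coefficients (c_i)_{i ∈ ℕᵈ} with |c_i| ≤ B·exp(−α·∑_{k=1}^d k²·i_k) for every i, and with u := ∑_i c_i ψ_i (the sum converging in H) satisfying ‖u‖² ≥ E, and every ε ∈ (0, 0.9), there exists a real M ≥ 0 such that the index set 𝔅 := {i ∈ ℕᵈ : ∑_{k=1}^d k²·i_k ≤ M} is finite with cardinality at most ε^{−ν}, and ‖u − ∑_{i∈𝔅} c_i ψ_i‖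 ≤ ε·‖u‖. -/
open Filter Topology

lemma aux_one_add_sq_le_exp {t : ℝ} (ht : 0 ≤ t) : 1 + t ^ 2 ≤ Real.exp t := by
  have h := Real.sum_le_exp_of_nonneg ht 4
  simp [Finset.sum_range_succ, Nat.factorial] at h
  nlinarith [mul_nonneg ht (sq_nonneg (t - 3/2)), ht]

lemma aux_log_le_sqrt {x : ℝ} (hx : 0 ≤ x) : Real.log (x + 1) ≤ Real.sqrt x := by
  have h1 : x + 1 ≤ Real.exp (Real.sqrt x) := by
    have := aux_one_add_sq_le_exp (Real.sqrt_nonneg x)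
    rwa [Real.sq_sqrt hx, add_comm] at this
  calc Real.log (x + 1) ≤ Real.log (Real.exp (Real.sqrt x)) :=
        Real.log_le_log (by positivity) h1
    _ = Real.sqrt x := Real.log_exp _

lemma aux_term_le {d : ℕ} (i : Fin d → ℕ) (k : Fin d) :
    ((k : ℕ) + 1) ^ 2 * i k ≤ weightedOrder i :=
  Finset.single_le_sum (f := fun k : Fin d => ((k : ℕ) + 1) ^ 2 * i k)
    (fun _ _ => Nat.zero_le _) (Finset.mem_univ k)

lemma aux_sum_exp_le {d : ℕ} {α : ℝ} (hα : 0 < α) (t : Finset (Fin d → ℕ)) :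
    ∑ i ∈ t, Real.exp (-α * (weightedOrder i : ℝ)) ≤
      Real.exp (Real.exp (-α) / (1 - Real.exp (-α)) ^ 2) := by
  classical
  set q0 : ℝ := Real.exp (-α) with hq0def
  have hq0 : 0 < q0 := Real.exp_pos _
  have hq01 : q0 < 1 := Real.exp_lt_one_iff.mpr (by linarith)
  set N : ℕ := t.sup (fun i => Finset.univ.sup i) + 1 with hN
  have hsub : t ⊆ Fintype.piFinset (fun _ : Fin d => Finset.range N) := by
    intro i hi
    rw [Fintype.mem_piFinset]
    intro k
    rw [Finset.mem_range, hN]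
    have h1 : i k ≤ Finset.univ.sup i := Finset.le_sup (Finset.mem_univ k)
    have h2 : Finset.univ.sup i ≤ t.sup (fun i => Finset.univ.sup i) := Finset.le_sup hi
    omega
  have hterm : ∀ i : Fin d → ℕ, Real.exp (-α * (weightedOrder i : ℝ)) =
      ∏ k : Fin d, (Real.exp (-α * ((k : ℝ) + 1) ^ 2)) ^ (i k) := by
    intro i
    have : (-α * (weightedOrder i : ℝ)) = ∑ k : Fin d, (i k : ℝ) * (-α * ((k : ℝ) + 1) ^ 2) := by
      rw [weightedOrder]
      push_cast
      rw [Finset.mul_sum]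
      congr 1; ext k; ring
    rw [this, Real.exp_sum]
    congr 1; ext k
    rw [Real.exp_nat_mul]
  have step1 : ∑ i ∈ t, Real.exp (-α * (weightedOrder i : ℝ)) ≤
      ∑ i ∈ Fintype.piFinset (fun _ : Fin d => Finset.range N),
        Real.exp (-α * (weightedOrder i : ℝ)) :=
    Finset.sum_le_sum_of_subset_of_nonneg hsub (fun _ _ _ => (Real.exp_pos _).le)
  have step2 : ∑ i ∈ Fintype.piFinset (fun _ : Fin d => Finset.range N),
      Real.exp (-α * (weightedOrder i : ℝ)) =
      ∏ k : Fin d, ∑ j ∈ Finset.range N, (Real.exp (-α * ((k : ℝ) + 1) ^ 2)) ^ j := by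
    rw [Finset.prod_univ_sum]
    exact Finset.sum_congr rfl (fun i _ => hterm i)
  -- per-factor bound
  have hqk : ∀ k : Fin d, Real.exp (-α * ((k : ℝ) + 1) ^ 2) ≤ q0 ^ ((k : ℕ) + 1) := by
    intro k
    have : ((k : ℕ) + 1 : ℝ) * (-α) = -α * ((k : ℕ) + 1 : ℝ) := by ring
    rw [hq0def, ← Real.exp_nat_mul]
    apply Real.exp_le_exp.mpr
    push_cast
    nlinarith [(Nat.cast_nonneg (k : ℕ) : (0:ℝ) ≤ (k : ℕ)), hα, sq_nonneg ((k:ℝ))]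
  have hqk1 : ∀ k : Fin d, Real.exp (-α * ((k : ℝ) + 1) ^ 2) ≤ q0 := by
    intro k
    rw [hq0def]
    apply Real.exp_le_exp.mpr
    nlinarith [(Nat.cast_nonneg (k : ℕ) : (0:ℝ) ≤ (k : ℕ)), sq_nonneg ((k:ℝ))]
  have factor : ∀ k : Fin d, ∑ j ∈ Finset.range N, (Real.exp (-α * ((k : ℝ) + 1) ^ 2)) ^ j ≤
      Real.exp (q0 ^ ((k : ℕ) + 1) / (1 - q0)) := by
    intro k
    set q : ℝ := Real.exp (-α * ((k : ℝ) + 1) ^ 2) with hq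
    have hq0' : 0 < q := Real.exp_pos _
    have hq1 : q < 1 := lt_of_le_of_lt (hqk1 k) hq01
    have h1 : ∑ j ∈ Finset.range N, q ^ j ≤ (1 - q)⁻¹ := by
      calc ∑ j ∈ Finset.range N, q ^ j ≤ ∑' j : ℕ, q ^ j :=
            Summable.sum_le_tsum _ (fun j _ => by positivity)
              (summable_geometric_of_lt_one hq0'.le hq1)
        _ = (1 - q)⁻¹ := tsum_geometric_of_lt_one hq0'.le hq1
    have h2 : (1 - q)⁻¹ ≤ Real.exp (q / (1 - q)) := by
      have := Real.add_one_le_exp (q / (1 - q))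
      have hq1' : 0 < 1 - q := by linarith
      have : (1 - q)⁻¹ = q / (1 - q) + 1 := by field_simp; ring
      rw [this]
      exact Real.add_one_le_exp _
    have h3 : q / (1 - q) ≤ q0 ^ ((k : ℕ) + 1) / (1 - q0) := by
      apply div_le_div₀ (by positivity) (hqk k) (by linarith)
      linarith [hqk1 k]
    calc ∑ j ∈ Finset.range N, q ^ j ≤ (1 - q)⁻¹ := h1
      _ ≤ Real.exp (q / (1 - q)) := h2
      _ ≤ Real.exp (q0 ^ ((k : ℕ) + 1) / (1 - q0)) := Real.exp_le_exp.mpr h3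
  have step3 : ∏ k : Fin d, ∑ j ∈ Finset.range N, (Real.exp (-α * ((k : ℝ) + 1) ^ 2)) ^ j ≤
      ∏ k : Fin d, Real.exp (q0 ^ ((k : ℕ) + 1) / (1 - q0)) := by
    apply Finset.prod_le_prod (fun k _ => ?_) (fun k _ => factor k)
    apply Finset.sum_nonneg; intro j _; positivity
  have step4 : ∏ k : Fin d, Real.exp (q0 ^ ((k : ℕ) + 1) / (1 - q0)) ≤
      Real.exp (q0 / (1 - q0) ^ 2) := by
    rw [← Real.exp_sum]
    apply Real.exp_le_exp.mpr
    have hsum : ∑ k : Fin d, q0 ^ ((k : ℕ) + 1) ≤ q0 / (1 - q0) := by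
      have : ∑ k : Fin d, q0 ^ ((k : ℕ) + 1) = q0 * ∑ k ∈ Finset.range d, q0 ^ k := by
        rw [Finset.mul_sum, ← Fin.sum_univ_eq_sum_range (fun k => q0 * q0 ^ k)]
        congr 1; ext k; rw [pow_succ]; ring
      rw [this]
      have hg : ∑ k ∈ Finset.range d, q0 ^ k ≤ (1 - q0)⁻¹ := by
        calc ∑ k ∈ Finset.range d, q0 ^ k ≤ ∑' k : ℕ, q0 ^ k :=
              Summable.sum_le_tsum _ (fun j _ => by positivity)
                (summable_geometric_of_lt_one hq0.le hq01)
          _ = (1 - q0)⁻¹ := tsum_geometric_of_lt_one hq0.le hq01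
      calc q0 * ∑ k ∈ Finset.range d, q0 ^ k ≤ q0 * (1 - q0)⁻¹ :=
            mul_le_mul_of_nonneg_left hg hq0.le
        _ = q0 / (1 - q0) := by rw [div_eq_mul_inv]
    have h1q : 0 < 1 - q0 := by linarith
    calc ∑ k : Fin d, q0 ^ ((k : ℕ) + 1) / (1 - q0)
        = (∑ k : Fin d, q0 ^ ((k : ℕ) + 1)) / (1 - q0) := by rw [Finset.sum_div]
      _ ≤ (q0 / (1 - q0)) / (1 - q0) := by gcongr
      _ = q0 / (1 - q0) ^ 2 := by rw [div_div, ← sq]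
  calc ∑ i ∈ t, Real.exp (-α * (weightedOrder i : ℝ))
      ≤ _ := step1
    _ = _ := step2
    _ ≤ _ := step3
    _ ≤ _ := step4

lemma aux_card {d : ℕ} (M : ℝ) (hM : 0 ≤ M) :
    ∃ hfin : {i : Fin d → ℕ | (weightedOrder i : ℝ) ≤ M}.Finite,
      (hfin.toFinset.card : ℝ) ≤ Real.exp M := by
  classical
  set Mn : ℕ := ⌊M⌋₊ with hMn
  have hSle : ∀ i : Fin d → ℕ, (weightedOrder i : ℝ) ≤ M → weightedOrder i ≤ Mn :=
    fun i hi => Nat.le_floor hi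
  have hle : ∀ i : Fin d → ℕ, (weightedOrder i : ℝ) ≤ M → ∀ k, i k ≤ Mn := by
    intro i hi k
    have h1 := aux_term_le i k
    have h2 : i k ≤ ((k : ℕ) + 1) ^ 2 * i k := Nat.le_mul_of_pos_left _ (by positivity)
    exact le_trans (le_trans h2 h1) (hSle i hi)
  have hfin : {i : Fin d → ℕ | (weightedOrder i : ℝ) ≤ M}.Finite := by
    apply Set.Finite.subset
      (Finset.finite_toSet (Fintype.piFinset (fun _ : Fin d => Finset.range (Mn + 1))))
    intro i hi
    simp only [Finset.coe_sort_coe, Finset.mem_coe, Fintype.mem_piFinset, Finset.mem_range]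
    exact fun k => Nat.lt_succ_of_le (hle i hi k)
  refine ⟨hfin, ?_⟩
  set T : Finset (Fin d → ℕ) := Fintype.piFinset
    (fun k : Fin d => if ((k : ℕ) + 1) ^ 2 ≤ Mn then Finset.range (Mn + 1) else {0}) with hT
  have hsub2 : hfin.toFinset ⊆ T := by
    intro i hi
    rw [Set.Finite.mem_toFinset] at hi
    rw [hT, Fintype.mem_piFinset]
    intro k
    by_cases h : ((k : ℕ) + 1) ^ 2 ≤ Mn
    · simp only [h, if_true, Finset.mem_range]
      exact Nat.lt_succ_of_le (hle i hi k)
    · simp only [h, if_false, Finset.mem_singleton]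
      by_contra hik
      have hik1 : 1 ≤ i k := Nat.one_le_iff_ne_zero.mpr hik
      have : ((k : ℕ) + 1) ^ 2 ≤ ((k : ℕ) + 1) ^ 2 * i k := Nat.le_mul_of_pos_right _ (by omega)
      exact h (le_trans (le_trans this (aux_term_le i k)) (hSle i hi))
  set m : ℕ := (Finset.univ.filter (fun k : Fin d => ((k : ℕ) + 1) ^ 2 ≤ Mn)).card with hm
  have hcardT : T.card = (Mn + 1) ^ m := by
    rw [hT, Fintype.card_piFinset]
    rw [show (fun k : Fin d => (if ((k : ℕ) + 1) ^ 2 ≤ Mn then Finset.range (Mn + 1) else {0}).card)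
        = fun k : Fin d => (if ((k : ℕ) + 1) ^ 2 ≤ Mn then Mn + 1 else 1) by
      funext k; split <;> simp]
    rw [Finset.prod_ite, Finset.prod_const, Finset.prod_const, one_pow, mul_one, hm]
  have hmsqrt : m ≤ Nat.sqrt Mn := by
    have := Finset.card_le_card_of_injOn (f := fun k : Fin d => (k : ℕ))
      (s := Finset.univ.filter (fun k : Fin d => ((k : ℕ) + 1) ^ 2 ≤ Mn))
      (t := Finset.range (Nat.sqrt Mn)) ?_ ?_
    · simpa [hm, Finset.card_range] using this
    · intro k hk
      rw [Finset.mem_coe, Finset.mem_filter] at hk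
      rw [Finset.mem_coe, Finset.mem_range]
      have : (k : ℕ) + 1 ≤ Nat.sqrt Mn := Nat.le_sqrt'.mpr hk.2
      show (k : ℕ) < Nat.sqrt Mn
      omega
    · exact Function.Injective.injOn Fin.val_injective
  -- real bound
  have hcard := Finset.card_le_card hsub2
  have hMnle : (Mn : ℝ) ≤ M := Nat.floor_le hM
  have hmR : (m : ℝ) ≤ Real.sqrt M := by
    have h0 : ((Nat.sqrt Mn : ℕ) : ℝ) ^ 2 ≤ M := by
      calc ((Nat.sqrt Mn : ℕ) : ℝ) ^ 2 = ((Nat.sqrt Mn ^ 2 : ℕ) : ℝ) := by push_cast; ring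
        _ ≤ (Mn : ℝ) := by exact_mod_cast Nat.sqrt_le' Mn
        _ ≤ M := hMnle
    have h1 : ((Nat.sqrt Mn : ℕ) : ℝ) ≤ Real.sqrt M :=
      (Real.le_sqrt (Nat.cast_nonneg _) hM).mpr h0
    calc (m : ℝ) ≤ ((Nat.sqrt Mn : ℕ) : ℝ) := by exact_mod_cast hmsqrt
      _ ≤ Real.sqrt M := h1
  have hlog : Real.log ((Mn : ℝ) + 1) ≤ Real.sqrt M := by
    calc Real.log ((Mn : ℝ) + 1) ≤ Real.sqrt (Mn : ℝ) := aux_log_le_sqrt (Nat.cast_nonneg _)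
      _ ≤ Real.sqrt M := Real.sqrt_le_sqrt hMnle
  have hexp : (((Mn + 1) ^ m : ℕ) : ℝ) ≤ Real.exp M := by
    have hpos : (0 : ℝ) < (Mn : ℝ) + 1 := by positivity
    have heq : (((Mn + 1) ^ m : ℕ) : ℝ) = Real.exp ((m : ℝ) * Real.log ((Mn : ℝ) + 1)) := by
      rw [Real.exp_nat_mul, Real.exp_log hpos]
      push_cast; ring
    rw [heq]
    apply Real.exp_le_exp.mpr
    calc (m : ℝ) * Real.log ((Mn : ℝ) + 1) ≤ Real.sqrt M * Real.sqrt M := by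
          apply mul_le_mul hmR hlog (Real.log_nonneg (by linarith [(Nat.cast_nonneg Mn : (0:ℝ) ≤ (Mn:ℕ))]))
            (Real.sqrt_nonneg M)
      _ = M := Real.mul_self_sqrt hM
  calc (hfin.toFinset.card : ℝ) ≤ (T.card : ℝ) := by exact_mod_cast hcard
    _ = (((Mn + 1) ^ m : ℕ) : ℝ) := by rw [hcardT]
    _ ≤ Real.exp M := hexp

lemma aux_norm_tail {H : Type} [NormedAddCommGroup H] [InnerProductSpace ℝ H]
    {ι : Type*} (ψ : ι → H) (hψ : Orthonormal ℝ ψ) (c : ι → ℝ)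
    (hc2 : Summable (fun i => c i ^ 2)) (u : H)
    (hu : HasSum (fun i => c i • ψ i) u) (s : Finset ι) :
    ‖u - ∑ i ∈ s, c i • ψ i‖ ^ 2 = ∑' j : {i // i ∉ s}, c (j : ι) ^ 2 := by
  classical
  set a : H := u - ∑ i ∈ s, c i • ψ i with ha
  have h1 : HasSum (fun j : {i // i ∉ s} => c (j : ι) • ψ (j : ι)) a := by
    have h0 : HasSum (fun i => c i • ψ i) (a + ∑ i ∈ s, c i • ψ i) := by
      rw [ha, sub_add_cancel]; exact hu
    exact (Finset.hasSum_compl_iff (f := fun i => c i • ψ i) s).mpr h0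
  have hψ' : Orthonormal ℝ (fun j : {i // i ∉ s} => ψ (j : ι)) :=
    hψ.comp _ Subtype.coe_injective
  have h2 : Summable (fun j : {i // i ∉ s} => c (j : ι) ^ 2) :=
    hc2.subtype _
  have key : ∀ t : Finset {i // i ∉ s},
      ‖∑ j ∈ t, c (j : ι) • ψ (j : ι)‖ ^ 2 = ∑ j ∈ t, c (j : ι) ^ 2 := by
    intro t
    have h := hψ'.inner_sum (fun j => c (j : ι)) (fun j => c (j : ι)) t
    simp only [starRingEnd_apply, star_trivial] at h
    rw [← real_inner_self_eq_norm_sq]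
    rw [h]
    exact Finset.sum_congr rfl (fun j _ => (sq (c (j : ι))).symm ▸ rfl)
  have h4 : Tendsto (fun t : Finset {i // i ∉ s} => ∑ j ∈ t, c (j : ι) ^ 2)
      atTop (𝓝 (‖a‖ ^ 2)) := by
    have h5 := (h1.norm.pow 2)
    simp only [key] at h5
    exact h5
  exact tendsto_nhds_unique h4 h2.hasSum

/-- Lemma 4.6: for a quantity of interest with exponentially decaying polynomial chaos
coefficients, there is `ν ≥ 0`, depending only on `B`, `α` and the lower bound `E` on
`‖u‖²`, such that for every `ε ∈ (0, 0.9)` there is an anisotropic order basis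
`𝔅 = {i : S(i) ≤ M}` of cardinality at most `ε^{−ν}` whose best approximation has relative
error at most `ε`; both bounds are independent of the dimension `d`. -/
theorem anisotropic_basis_dimension_independent :
    ∀ B α E : ℝ, 0 < B → 0 < α → 0 < E →
    ∃ ν : ℝ, 0 ≤ ν ∧
      ∀ d : ℕ, 1 ≤ d →
      ∀ (H : Type) [NormedAddCommGroup H] [InnerProductSpace ℝ H],
      ∀ ψ : (Fin d → ℕ) → H, Orthonormal ℝ ψ →
      ∀ c : (Fin d → ℕ) → ℝ, Summable (fun i => (c i) ^ 2) →
      (∀ i : Fin d → ℕ, |c i| ≤ B * Real.exp (-α * (weightedOrder i : ℝ))) →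
      ∀ u : H, HasSum (fun i => c i • ψ i) u → E ≤ ‖u‖ ^ 2 →
      ∀ ε : ℝ, 0 < ε → ε < 0.9 →
      ∃ M : ℝ, 0 ≤ M ∧
        ∃ hfin : {i : Fin d → ℕ | (weightedOrder i : ℝ) ≤ M}.Finite,
          (hfin.toFinset.card : ℝ) ≤ ε ^ (-ν) ∧
            ‖u - ∑ i ∈ hfin.toFinset, c i • ψ i‖ ≤ ε * ‖u‖ := by
  intro B α E hB hα hE
  classical
  set D₀ : ℝ := Real.exp (Real.exp (-α) / (1 - Real.exp (-α)) ^ 2) with hD₀def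
  have hD₀ : 0 < D₀ := Real.exp_pos _
  set K : ℝ := max 0 (Real.log (B ^ 2 * D₀ / E)) with hKdef
  have hK : 0 ≤ K := le_max_left _ _
  set L0 : ℝ := -Real.log (9 / 10 : ℝ) with hL0def
  have hL0 : 0 < L0 := by
    have : Real.log (9 / 10 : ℝ) < 0 := Real.log_neg (by norm_num) (by norm_num)
    rw [hL0def]; linarith
  refine ⟨(2 + K / L0) / α, by positivity, ?_⟩
  intro d hd H _ _ ψ hψ c hc2 hcb u hu hE2 ε hε hε9
  set ν : ℝ := (2 + K / L0) / α with hνdef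
  have hε9' : ε ≤ (9 / 10 : ℝ) := by norm_num at hε9 ⊢; linarith
  have hεlt1 : ε < 1 := lt_of_le_of_lt hε9' (by norm_num)
  set L : ℝ := -Real.log ε with hLdef
  have hL : 0 < L := by
    have := Real.log_neg hε hεlt1
    rw [hLdef]; linarith
  have hLL0 : L0 ≤ L := by
    have h1 : Real.log ε ≤ Real.log (9 / 10 : ℝ) := Real.log_le_log hε hε9'
    rw [hLdef, hL0def]; linarith
  set M : ℝ := (2 * L + K) / α with hMdef
  have hM0 : 0 < M := by
    apply div_pos (by linarith) hα
  obtain ⟨hfin, hcard⟩ := aux_card (d := d) M hM0.le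
  refine ⟨M, hM0.le, hfin, ?_, ?_⟩
  · -- cardinality bound
    have hMν : M ≤ L * ν := by
      have h1 : K * L0 ≤ K * L := mul_le_mul_of_nonneg_left hLL0 hK
      have h2 : K ≤ L * (K / L0) := by
        rw [← mul_div_assoc, le_div_iff₀ hL0]
        nlinarith
      have h3 : 2 * L + K ≤ L * (2 + K / L0) := by nlinarith
      rw [hMdef, hνdef, ← mul_div_assoc]
      exact div_le_div_of_nonneg_right h3 hα.le
    calc (hfin.toFinset.card : ℝ) ≤ Real.exp M := hcard
      _ ≤ Real.exp (L * ν) := Real.exp_le_exp.mpr hMν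
      _ = ε ^ (-ν) := by
          rw [Real.rpow_def_of_pos hε]
          congr 1
          rw [hLdef]; ring
  · -- error bound
    set s : Finset (Fin d → ℕ) := hfin.toFinset with hs
    have hnorm := aux_norm_tail ψ hψ c hc2 u hu s
    have hg : ∀ t : Finset (Fin d → ℕ),
        ∑ i ∈ t, Real.exp (-α * (weightedOrder i : ℝ)) ≤ D₀ := fun t => aux_sum_exp_le hα t
    have hgsum : Summable (fun i : Fin d → ℕ => Real.exp (-α * (weightedOrder i : ℝ))) :=
      summable_of_sum_le (fun i => (Real.exp_pos _).le) hg
    have hgsubJ : Summable (fun j : {i // i ∉ s} =>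
        Real.exp (-α * (weightedOrder (j : Fin d → ℕ) : ℝ))) := hgsum.subtype _
    have htsumJ : ∑' j : {i // i ∉ s},
        Real.exp (-α * (weightedOrder (j : Fin d → ℕ) : ℝ)) ≤ D₀ := by
      apply Summable.tsum_le_of_sum_le hgsubJ
      intro t
      have hinj : ∀ x ∈ t, ∀ y ∈ t, (x : Fin d → ℕ) = (y : Fin d → ℕ) → x = y :=
        fun x _ y _ h => Subtype.ext h
      calc ∑ j ∈ t, Real.exp (-α * (weightedOrder (j : Fin d → ℕ) : ℝ))
          = ∑ i ∈ t.image Subtype.val, Real.exp (-α * (weightedOrder i : ℝ)) :=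
            (Finset.sum_image (f := fun i => Real.exp (-α * (weightedOrder i : ℝ))) hinj).symm
        _ ≤ D₀ := hg _
    have hpt : ∀ j : {i // i ∉ s}, c (j : Fin d → ℕ) ^ 2 ≤
        B ^ 2 * Real.exp (-α * M) * Real.exp (-α * (weightedOrder (j : Fin d → ℕ) : ℝ)) := by
      intro j
      have hjS : M < (weightedOrder (j : Fin d → ℕ) : ℝ) := by
        have hj := j.2
        simp only [hs, Set.Finite.mem_toFinset, Set.mem_setOf_eq] at hj
        exact not_le.mp hj
      have h1 : |c (j : Fin d → ℕ)| ≤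
          B * Real.exp (-α * (weightedOrder (j : Fin d → ℕ) : ℝ)) := hcb _
      calc c (j : Fin d → ℕ) ^ 2 = |c (j : Fin d → ℕ)| ^ 2 := (sq_abs _).symm
        _ ≤ (B * Real.exp (-α * (weightedOrder (j : Fin d → ℕ) : ℝ))) ^ 2 :=
            pow_le_pow_left₀ (abs_nonneg _) h1 2
        _ = B ^ 2 * (Real.exp (-α * (weightedOrder (j : Fin d → ℕ) : ℝ)) *
            Real.exp (-α * (weightedOrder (j : Fin d → ℕ) : ℝ))) := by ring
        _ ≤ B ^ 2 * (Real.exp (-α * M) *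
            Real.exp (-α * (weightedOrder (j : Fin d → ℕ) : ℝ))) := by
            apply mul_le_mul_of_nonneg_left ?_ (by positivity)
            apply mul_le_mul_of_nonneg_right (Real.exp_le_exp.mpr ?_) (Real.exp_pos _).le
            nlinarith
        _ = B ^ 2 * Real.exp (-α * M) *
            Real.exp (-α * (weightedOrder (j : Fin d → ℕ) : ℝ)) := by ring
    have hc2J : Summable (fun j : {i // i ∉ s} => c (j : Fin d → ℕ) ^ 2) := hc2.subtype _
    have hT : ∑' j : {i // i ∉ s}, c (j : Fin d → ℕ) ^ 2 ≤
        B ^ 2 * Real.exp (-α * M) * D₀ := by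
      calc ∑' j : {i // i ∉ s}, c (j : Fin d → ℕ) ^ 2
          ≤ ∑' j : {i // i ∉ s}, B ^ 2 * Real.exp (-α * M) *
              Real.exp (-α * (weightedOrder (j : Fin d → ℕ) : ℝ)) :=
            Summable.tsum_le_tsum hpt hc2J (hgsubJ.mul_left _)
        _ = B ^ 2 * Real.exp (-α * M) * ∑' j : {i // i ∉ s},
              Real.exp (-α * (weightedOrder (j : Fin d → ℕ) : ℝ)) := tsum_mul_left
        _ ≤ B ^ 2 * Real.exp (-α * M) * D₀ :=
            mul_le_mul_of_nonneg_left htsumJ (by positivity)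
    have hMε : B ^ 2 * Real.exp (-α * M) * D₀ ≤ ε ^ 2 * E := by
      have hαM : -α * M = 2 * Real.log ε + -K := by
        rw [hMdef, hLdef]
        field_simp
        ring
      have hexpM : Real.exp (-α * M) = ε ^ 2 * Real.exp (-K) := by
        rw [hαM, Real.exp_add]
        congr 1
        rw [show (2 : ℝ) * Real.log ε = ((2 : ℕ) : ℝ) * Real.log ε by norm_num,
          Real.exp_nat_mul, Real.exp_log hε]
      have hKE : B ^ 2 * D₀ * Real.exp (-K) ≤ E := by
        have h1 : Real.log (B ^ 2 * D₀ / E) ≤ K := le_max_right _ _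
        have h2 : B ^ 2 * D₀ / E ≤ Real.exp K := by
          calc B ^ 2 * D₀ / E = Real.exp (Real.log (B ^ 2 * D₀ / E)) :=
                (Real.exp_log (by positivity)).symm
            _ ≤ Real.exp K := Real.exp_le_exp.mpr h1
        have h3 : B ^ 2 * D₀ ≤ Real.exp K * E := (div_le_iff₀ hE).mp h2
        calc B ^ 2 * D₀ * Real.exp (-K) ≤ Real.exp K * E * Real.exp (-K) :=
              mul_le_mul_of_nonneg_right h3 (Real.exp_pos _).le
          _ = E := by
              rw [mul_comm (Real.exp K) E, mul_assoc, ← Real.exp_add]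
              simp
      calc B ^ 2 * Real.exp (-α * M) * D₀ = B ^ 2 * D₀ * Real.exp (-K) * ε ^ 2 := by
            rw [hexpM]; ring
        _ ≤ E * ε ^ 2 := mul_le_mul_of_nonneg_right hKE (by positivity)
        _ = ε ^ 2 * E := by ring
    have hfinal2 : ‖u - ∑ i ∈ s, c i • ψ i‖ ^ 2 ≤ (ε * ‖u‖) ^ 2 := by
      rw [hnorm]
      calc ∑' j : {i // i ∉ s}, c (j : Fin d → ℕ) ^ 2
          ≤ B ^ 2 * Real.exp (-α * M) * D₀ := hT
        _ ≤ ε ^ 2 * E := hMε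
        _ ≤ ε ^ 2 * ‖u‖ ^ 2 := mul_le_mul_of_nonneg_left hE2 (by positivity)
        _ = (ε * ‖u‖) ^ 2 := by ring
    exact le_of_pow_le_pow_left₀ (by norm_num) (by positivity) hfinal2
end
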